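/- arXiv:0707.1069 — 5 statements merged into one kernel-verified Lean document; each statement's English description precedes it below -/
import Mathlib

section
/- If G is a finite simple graph satisfying χ(G) > (ω(G) + Δ(G) + 1)/2, then |G| − Δ(G) ≥ α(G) + (ω(G) − 1)/2. -/
open Finset

variable {V : Type*} [Fintype V] [DecidableEq V]

/-- A (proper) coloring of `G`: a partition of the vertex set into nonempty independent sets. -/
def IsColoring (G : SimpleGraph V) (C : Finset (Finset V)) : Prop :=
  (∀ I ∈ C, I.Nonempty) ∧
  (∀ v : V, ∃! I, I ∈ C ∧ v ∈ I) ∧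
  (∀ I ∈ C, ∀ v ∈ I, ∀ w ∈ I, ¬ G.Adj v w)

/-- The frame of a coloring: the multiset of the orders of its color classes. -/
def Frame (C : Finset (Finset V)) : Multiset ℕ :=
  C.val.map Finset.card

/-- The directed edge `(v, w)` is `C`-lonely: `w` lies in a color class `I` not containing `v`
and `N(v) ∩ I = {w}`. -/
def Lonely (G : SimpleGraph V) (C : Finset (Finset V)) (v w : V) : Prop :=
  ∃ I ∈ C, v ∉ I ∧ w ∈ I ∧ ∀ x ∈ I, (G.Adj v x ↔ x = w)

/-- The chromatic number: the minimum number of color classes in a proper coloring. -/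
noncomputable def chi (G : SimpleGraph V) : ℕ :=
  sInf {n | ∃ C : Finset (Finset V), IsColoring G C ∧ C.card = n}

/-- An optimal coloring: a proper coloring with `χ(G)` color classes. -/
def IsOptimalColoring (G : SimpleGraph V) (C : Finset (Finset V)) : Prop :=
  IsColoring G C ∧ C.card = chi G

/-- A (directed) path in the `C`-lonely graph `L_C(G)`, as a nonempty duplicate-free list of
vertices whose consecutive pairs are `C`-lonely edges. -/
def IsLonelyPath (G : SimpleGraph V) (C : Finset (Finset V)) (p : List V) : Prop :=
  p ≠ [] ∧ p.Nodup ∧ List.Chain' (Lonely G C) p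

/-- The stinginess `ι(G)`: the maximum number of singleton color classes appearing in an
optimal coloring of `G`. -/
noncomputable def stinginess (G : SimpleGraph V) : ℕ :=
  sSup {n | ∃ C : Finset (Finset V), IsOptimalColoring G C ∧
    (C.filter fun I => I.card = 1).card = n}

/-- The independence number `α(G)`. -/
noncomputable def indepNum (G : SimpleGraph V) : ℕ :=
  sSup {n | ∃ s : Finset V, (∀ v ∈ s, ∀ w ∈ s, ¬ G.Adj v w) ∧ s.card = n}

/-- An `r`-bounded coloring has all color classes of order at most `r`. -/
def RBounded (r : ℕ) (C : Finset (Finset V)) : Prop :=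
  ∀ I ∈ C, I.card ≤ r

/-- `χ_r(G)`: the minimum number of color classes in an `r`-bounded coloring of `G`. -/
noncomputable def chiR (G : SimpleGraph V) (r : ℕ) : ℕ :=
  sInf {n | ∃ C : Finset (Finset V), IsColoring G C ∧ RBounded r C ∧ C.card = n}

/-- An optimal `r`-bounded coloring. -/
def IsOptimalRBounded (G : SimpleGraph V) (r : ℕ) (C : Finset (Finset V)) : Prop :=
  IsColoring G C ∧ RBounded r C ∧ C.card = chiR G r

/-- `M_r(G)`: the maximum number of order-`r` color classes in an optimal `r`-bounded
coloring of `G`. -/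
noncomputable def Mr (G : SimpleGraph V) (r : ℕ) : ℕ :=
  sSup {n | ∃ C : Finset (Finset V), IsOptimalRBounded G r C ∧
    (C.filter fun I => I.card = r).card = n}

/-- The `r`-bounded stinginess `ι_r(G)`: the maximum number of singleton color classes in an
optimal `r`-bounded coloring of `G`. -/
noncomputable def stinginessR (G : SimpleGraph V) (r : ℕ) : ℕ :=
  sSup {n | ∃ C : Finset (Finset V), IsOptimalRBounded G r C ∧
    (C.filter fun I => I.card = 1).card = n}

/-- `P` is a frame property: membership in `P` only depends on the frame. -/
def IsFrameProperty (G : SimpleGraph V) (P : Finset (Finset V) → Prop) : Prop :=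
  ∀ C C' : Finset (Finset V), IsColoring G C → IsColoring G C' →
    Frame C = Frame C' → P C → P C'

/-- `P` is singleton-friendly: `P` is preserved by merging two singleton color classes. -/
def IsSingletonFriendly (G : SimpleGraph V) (P : Finset (Finset V) → Prop) : Prop :=
  ∀ C : Finset (Finset V), IsColoring G C → ∀ a b : V, a ≠ b → ¬ G.Adj a b →
    ({a} : Finset V) ∈ C → ({b} : Finset V) ∈ C → P C →
      P (insert ({a, b} : Finset V) ((C.erase {a}).erase {b}))

/-- A `P`-optimal coloring: a coloring satisfying `P` with the minimum number of color classes
among colorings satisfying `P`. -/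
def IsPOptimal (G : SimpleGraph V) (P : Finset (Finset V) → Prop)
    (C : Finset (Finset V)) : Prop :=
  IsColoring G C ∧ P C ∧
    ∀ C' : Finset (Finset V), IsColoring G C' → P C' → C.card ≤ C'.card

/-- `Frame_m(C)`: the entries of the frame of `C` that are at least `m`. -/
def FrameGe (m : ℕ) (C : Finset (Finset V)) : Multiset ℕ :=
  (Frame C).filter (fun k => m ≤ k)

/-- The matching number `ν(G)`: the maximum number of edges in a matching of `G`. -/
noncomputable def matchingNumber (G : SimpleGraph V) : ℕ :=
  sSup {n | ∃ M : G.Subgraph, M.IsMatching ∧ M.edgeSet.ncard = n}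
namespace Aux
set_option linter.unusedSectionVars false

variable {G : SimpleGraph V} [DecidableRel G.Adj]

section
variable (G)

/-- independent set predicate -/
def Indep (A : Finset V) : Prop := ∀ v ∈ A, ∀ w ∈ A, ¬ G.Adj v w

/-- proper coloring of the vertices in `U` -/
def PCol (U : Finset V) (c : V → ℕ) : Prop :=
  ∀ v ∈ U, ∀ w ∈ U, G.Adj v w → c v ≠ c w

/-- minimum number of colors needed to properly color `U` -/
noncomputable def chiP (U : Finset V) : ℕ :=
  sInf {m | ∃ c : V → ℕ, PCol G U c ∧ (U.image c).card = m}

end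

/-- color class of color `j` inside `U` -/
def fib (U : Finset V) (c : V → ℕ) (j : ℕ) : Finset V := U.filter (fun v => c v = j)

lemma mem_fib {U : Finset V} {c : V → ℕ} {j : ℕ} {v : V} :
    v ∈ fib U c j ↔ v ∈ U ∧ c v = j := by simp [fib]

lemma pcol_set_nonempty (U : Finset V) :
    {m | ∃ c : V → ℕ, PCol G U c ∧ (U.image c).card = m}.Nonempty := by
  refine ⟨_, fun v => ((Fintype.equivFin V) v : ℕ), fun v _ w _ hadj h => ?_, rfl⟩
  exact hadj.ne (by simpa using ((Fintype.equivFin V).injective (Fin.val_injective h)))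

lemma chiP_le {U : Finset V} {c : V → ℕ} (hc : PCol G U c) :
    chiP G U ≤ (U.image c).card :=
  Nat.sInf_le ⟨c, hc, rfl⟩

lemma exists_optP (U : Finset V) :
    ∃ c : V → ℕ, PCol G U c ∧ (U.image c).card = chiP G U :=
  Nat.sInf_mem (pcol_set_nonempty U)

lemma indep_bddAbove :
    BddAbove {n | ∃ s : Finset V, (∀ v ∈ s, ∀ w ∈ s, ¬ G.Adj v w) ∧ s.card = n} :=
  ⟨Fintype.card V, fun _ ⟨s, _, hn⟩ => hn ▸ s.card_le_univ⟩

lemma indep_card_le {A : Finset V} (hA : Indep G A) : A.card ≤ indepNum G :=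
  le_csSup indep_bddAbove ⟨A, hA, rfl⟩

lemma exists_maxIndep :
    ∃ A : Finset V, Indep G A ∧ A.card = indepNum G ∧
      ∀ z, z ∉ A → ∃ a ∈ A, G.Adj z a := by
  have h0 : indepNum G ∈ {n | ∃ s : Finset V, (∀ v ∈ s, ∀ w ∈ s, ¬ G.Adj v w) ∧ s.card = n} :=
    Nat.sSup_mem ⟨0, ∅, by simp, by simp⟩ indep_bddAbove
  obtain ⟨A, hA, hcard⟩ := h0
  refine ⟨A, hA, hcard, fun z hz => ?_⟩
  by_contra hno
  push_neg at hno
  have hins : Indep G (insert z A) := by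
    intro v hv w hw
    rcases Finset.mem_insert.1 hv with h1 | h1 <;> rcases Finset.mem_insert.1 hw with h2 | h2
    · rw [h1, h2]; exact G.irrefl
    · rw [h1]; exact hno w h2
    · rw [h2]; exact fun h => hno v h1 h.symm
    · exact hA v h1 w h2
  have : (insert z A).card ≤ indepNum G := indep_card_le hins
  rw [Finset.card_insert_of_notMem hz, hcard] at this
  omega

lemma chi_le_isColoring {C : Finset (Finset V)} (hC : IsColoring G C) :
    chi G ≤ C.card :=
  Nat.sInf_le ⟨C, hC, rfl⟩

lemma chi_le_chiP_succ {A : Finset V} (hA : Indep G A) (hAne : A.Nonempty) :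
    chi G ≤ chiP G (Finset.univ \ A) + 1 := by
  classical
  obtain ⟨c, hc, hk⟩ := exists_optP (G := G) (Finset.univ \ A)
  set U : Finset V := Finset.univ \ A with hU
  have hfibU : ∀ j, fib U c j ⊆ U := fun j => Finset.filter_subset _ _
  have hAfib : ∀ j, A ≠ fib U c j ∨ True := fun _ => Or.inr trivial
  set C : Finset (Finset V) := insert A ((U.image c).image (fun j => fib U c j)) with hC
  have hAnotfib : ∀ j, A = fib U c j → False := by
    intro j hj
    obtain ⟨a, ha⟩ := hAne
    have : a ∈ U := hfibU j (hj ▸ ha)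
    simp [hU] at this
    exact this ha
  have hmemC : ∀ I ∈ C, I = A ∨ ∃ j ∈ U.image c, I = fib U c j := by
    intro I hI
    rcases Finset.mem_insert.1 hI with rfl | hI
    · exact Or.inl rfl
    · obtain ⟨j, hj, rfl⟩ := Finset.mem_image.1 hI
      exact Or.inr ⟨j, hj, rfl⟩
  have hcol : IsColoring G C := by
    refine ⟨?_, ?_, ?_⟩
    · intro I hI
      rcases hmemC I hI with rfl | ⟨j, hj, rfl⟩
      · exact hAne
      · obtain ⟨v, hv, hvj⟩ := Finset.mem_image.1 hj
        exact ⟨v, mem_fib.2 ⟨hv, hvj⟩⟩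
    · intro v
      by_cases hv : v ∈ A
      · refine ⟨A, ⟨Finset.mem_insert_self _ _, hv⟩, ?_⟩
        rintro I ⟨hI, hvI⟩
        rcases hmemC I hI with rfl | ⟨j, _, rfl⟩
        · rfl
        · exact absurd (hfibU j hvI) (by simp [hU, hv])
      · have hvU : v ∈ U := by simp [hU, hv]
        refine ⟨fib U c (c v), ⟨Finset.mem_insert_of_mem
          (Finset.mem_image_of_mem _ (Finset.mem_image_of_mem c hvU)), mem_fib.2 ⟨hvU, rfl⟩⟩, ?_⟩
        rintro I ⟨hI, hvI⟩
        rcases hmemC I hI with rfl | ⟨j, _, rfl⟩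
        · exact absurd hvI hv
        · rw [(mem_fib.1 hvI).2]
    · intro I hI x hx y hy
      rcases hmemC I hI with rfl | ⟨j, _, rfl⟩
      · exact hA x hx y hy
      · intro hadj
        exact hc x (hfibU j hx) y (hfibU j hy) hadj
          ((mem_fib.1 hx).2.trans (mem_fib.1 hy).2.symm)
  calc chi G ≤ C.card := chi_le_isColoring hcol
    _ ≤ ((U.image c).image (fun j => fib U c j)).card + 1 := Finset.card_insert_le _ _
    _ ≤ (U.image c).card + 1 := by
        exact Nat.add_le_add_right (Finset.card_image_le) 1
    _ = chiP G U + 1 := by rw [hk]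

end Aux
namespace Aux

section Moves

variable {G : SimpleGraph V} [DecidableRel G.Adj] {U : Finset V} {c : V → ℕ}

/-- optimal proper coloring of `U` -/
def OptP (G : SimpleGraph V) [DecidableRel G.Adj] (U : Finset V) (c : V → ℕ) : Prop :=
  PCol G U c ∧ (U.image c).card = chiP G U

lemma pcol_iff :
    PCol G U c ↔ ∀ i : ℕ, ∀ x ∈ fib U c i, ∀ y ∈ fib U c i, ¬ G.Adj x y := by
  constructor
  · intro hc i x hx y hy hadj
    exact hc x (mem_fib.1 hx).1 y (mem_fib.1 hy).1 hadj
      ((mem_fib.1 hx).2.trans (mem_fib.1 hy).2.symm)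
  · intro h x hx y hy hadj heq
    exact h (c x) x (mem_fib.2 ⟨hx, rfl⟩) y (mem_fib.2 ⟨hy, heq.symm⟩) hadj

/-- recoloring a singleton vertex into a class with no neighbors contradicts optimality -/
lemma no_free_class (hc : OptP G U c) {v : V} (hv : v ∈ U)
    (hsv : fib U c (c v) = {v}) {j : ℕ} (hj : j ∈ U.image c) (hjv : j ≠ c v)
    (hfree : ∀ w ∈ fib U c j, ¬ G.Adj v w) : False := by
  classical
  set c' : V → ℕ := Function.update c v j with hc'
  have hc'v : c' v = j := Function.update_self v j c
  have hc'x : ∀ x, x ≠ v → c' x = c x := fun x hx => Function.update_of_ne hx j c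
  have hpc : PCol G U c' := by
    intro x hx y hy hadj heq
    have hxy : x ≠ y := hadj.ne
    by_cases hxv : x = v
    · have hyv : y ≠ v := fun h => hxy (hxv.trans h.symm)
      rw [hxv, hc'v, hc'x y hyv] at heq
      rw [hxv] at hadj
      exact hfree y (mem_fib.2 ⟨hy, heq.symm⟩) hadj
    · by_cases hyv : y = v
      · rw [hyv, hc'v, hc'x x hxv] at heq
        rw [hyv] at hadj
        exact hfree x (mem_fib.2 ⟨hx, heq⟩) hadj.symm
      · rw [hc'x x hxv, hc'x y hyv] at heq
        exact hc.1 x hx y hy hadj heq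
  have himg : U.image c' = (U.image c).erase (c v) := by
    ext i
    constructor
    · intro hi
      obtain ⟨x, hx, rfl⟩ := Finset.mem_image.1 hi
      by_cases hxv : x = v
      · rw [hxv, hc'v]
        exact Finset.mem_erase.2 ⟨hjv, hj⟩
      · rw [hc'x x hxv]
        refine Finset.mem_erase.2 ⟨fun h => hxv ?_, Finset.mem_image_of_mem c hx⟩
        have : x ∈ fib U c (c v) := mem_fib.2 ⟨hx, h⟩
        rw [hsv] at this
        exact Finset.mem_singleton.1 this
    · intro hi
      obtain ⟨hine, hi⟩ := Finset.mem_erase.1 hi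
      obtain ⟨x, hx, rfl⟩ := Finset.mem_image.1 hi
      have hxv : x ≠ v := fun h => hine (by rw [h])
      exact Finset.mem_image.2 ⟨x, hx, hc'x x hxv⟩
  have hlt : (U.image c').card < (U.image c).card := by
    rw [himg]
    exact Finset.card_erase_lt_of_mem (Finset.mem_image_of_mem c hv)
  have h1 := chiP_le hpc
  have h2 := hc.2
  omega

/-- two distinct singleton classes in an optimal coloring are adjacent -/
lemma singletons_adj (hc : OptP G U c) {u v : V} (hu : u ∈ U) (hv : v ∈ U)
    (hsu : fib U c (c u) = {u}) (hsv : fib U c (c v) = {v}) (huv : u ≠ v) :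
    G.Adj u v := by
  by_contra hna
  have hcucv : c u ≠ c v := by
    intro h
    rw [h, hsv] at hsu
    exact huv (Finset.singleton_injective hsu).symm
  refine no_free_class hc hv hsv (Finset.mem_image_of_mem c hu) hcucv ?_
  intro w hw
  rw [hsu, Finset.mem_singleton] at hw
  rw [hw]
  exact fun h => hna h.symm

/-- a singleton vertex has a neighbor in every other class -/
lemma singleton_hits (hc : OptP G U c) {v : V} (hv : v ∈ U)
    (hsv : fib U c (c v) = {v}) {j : ℕ} (hj : j ∈ U.image c) (hjv : j ≠ c v) :
    (fib U c j ∩ G.neighborFinset v).Nonempty := by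
  by_contra hne
  rw [Finset.not_nonempty_iff_eq_empty] at hne
  refine no_free_class hc hv hsv hj hjv (fun w hw hadj => ?_)
  have : w ∈ fib U c j ∩ G.neighborFinset v :=
    Finset.mem_inter.2 ⟨hw, by rwa [SimpleGraph.mem_neighborFinset]⟩
  rw [hne] at this
  exact absurd this (Finset.notMem_empty w)

section Swap

variable {v w : V} {j : ℕ}

lemma swap_mem_U (hv : v ∈ U) (hw : w ∈ U) {x : V} (hx : x ∈ U) :
    Equiv.swap v w x ∈ U := by
  by_cases h1 : x = v
  · rwa [h1, Equiv.swap_apply_left]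
  · by_cases h2 : x = w
    · rwa [h2, Equiv.swap_apply_right]
    · rwa [Equiv.swap_apply_of_ne_of_ne h1 h2]

lemma fib_swap (hv : v ∈ U) (hw : w ∈ U) (i : ℕ) :
    fib U (c ∘ (Equiv.swap v w)) i = (fib U c i).image (Equiv.swap v w) := by
  ext x
  simp only [mem_fib, Finset.mem_image, Function.comp_apply]
  constructor
  · intro ⟨hx, hcx⟩
    exact ⟨Equiv.swap v w x, ⟨swap_mem_U hv hw hx, hcx⟩, Equiv.swap_apply_self v w x⟩
  · rintro ⟨y, ⟨hy, hcy⟩, rfl⟩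
    exact ⟨swap_mem_U hv hw hy, by rwa [Equiv.swap_apply_self]⟩

lemma image_swap (hv : v ∈ U) (hw : w ∈ U) :
    U.image (c ∘ (Equiv.swap v w)) = U.image c := by
  ext i
  simp only [Finset.mem_image, Function.comp_apply]
  constructor
  · rintro ⟨x, hx, rfl⟩
    exact ⟨Equiv.swap v w x, swap_mem_U hv hw hx, rfl⟩
  · rintro ⟨x, hx, rfl⟩
    exact ⟨Equiv.swap v w x, swap_mem_U hv hw hx, by rw [Equiv.swap_apply_self]⟩

lemma card_fib_swap (hv : v ∈ U) (hw : w ∈ U) (i : ℕ) :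
    (fib U (c ∘ (Equiv.swap v w)) i).card = (fib U c i).card := by
  rw [fib_swap hv hw]
  exact Finset.card_image_of_injective _ (Equiv.injective _)

lemma fixed_of_not_mem {S : Finset V} (hv : v ∉ S) (hw : w ∉ S) :
    S.image (Equiv.swap v w) = S := by
  ext x
  simp only [Finset.mem_image]
  constructor
  · rintro ⟨y, hy, rfl⟩
    have hyv : y ≠ v := fun h => hv (by rw [← h]; exact hy)
    have hyw : y ≠ w := fun h => hw (by rw [← h]; exact hy)
    rwa [Equiv.swap_apply_of_ne_of_ne hyv hyw]
  · intro hx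
    have hxv : x ≠ v := fun h => hv (by rw [← h]; exact hx)
    have hxw : x ≠ w := fun h => hw (by rw [← h]; exact hx)
    exact ⟨x, hx, Equiv.swap_apply_of_ne_of_ne hxv hxw⟩

/-- the shift: swap a singleton vertex `v` with its unique neighbor `w` in class `j` -/
lemma optP_swap (hc : OptP G U c) (hv : v ∈ U)
    (hsv : fib U c (c v) = {v}) (hlj : fib U c j ∩ G.neighborFinset v = {w}) :
    OptP G U (c ∘ (Equiv.swap v w)) := by
  have hwmem : w ∈ fib U c j ∩ G.neighborFinset v := hlj ▸ Finset.mem_singleton_self w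
  have hwj : w ∈ fib U c j := (Finset.mem_inter.1 hwmem).1
  have hadjvw : G.Adj v w := by
    have := (Finset.mem_inter.1 hwmem).2
    rwa [SimpleGraph.mem_neighborFinset] at this
  have hw : w ∈ U := (mem_fib.1 hwj).1
  have hvw : v ≠ w := hadjvw.ne
  have hjcv : j ≠ c v := by
    intro h
    have : w ∈ fib U c (c v) := h ▸ hwj
    rw [hsv, Finset.mem_singleton] at this
    exact hvw this.symm
  have hvnotfibj : v ∉ fib U c j := by
    intro h
    exact hjcv ((mem_fib.1 h).2.symm)
  constructor
  · rw [pcol_iff]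
    intro i x hx y hy
    rw [fib_swap hv hw] at hx hy
    by_cases hicv : i = c v
    · rw [hicv, hsv] at hx hy
      simp only [Finset.image_singleton, Equiv.swap_apply_left, Finset.mem_singleton] at hx hy
      rw [hx, hy]
      exact G.irrefl
    · by_cases hij : i = j
      · rw [hij] at hx hy
        -- every element of the new class j is either v or an old element that is not a neighbor of v
        have key : ∀ z, z ∈ (fib U c j).image (Equiv.swap v w) →
            z = v ∨ (z ∈ fib U c j ∧ ¬ G.Adj v z) := by
          intro z hz
          obtain ⟨u, hu, rfl⟩ := Finset.mem_image.1 hz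
          by_cases huw : u = w
          · rw [huw, Equiv.swap_apply_right]
            exact Or.inl rfl
          · have huv : u ≠ v := fun h => hvnotfibj (h ▸ hu)
            rw [Equiv.swap_apply_of_ne_of_ne huv huw]
            refine Or.inr ⟨hu, fun hadj => huw ?_⟩
            have : u ∈ fib U c j ∩ G.neighborFinset v := Finset.mem_inter.2
              ⟨hu, (SimpleGraph.mem_neighborFinset G v u).2 hadj⟩
            rw [hlj, Finset.mem_singleton] at this
            exact this
        rcases key x hx with rfl | ⟨hxf, hxn⟩
        · rcases key y hy with rfl | ⟨_, hyn⟩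
          · exact G.irrefl
          · exact hyn
        · rcases key y hy with rfl | ⟨hyf, _⟩
          · exact fun h => hxn h.symm
          · exact (pcol_iff.1 hc.1) j x hxf y hyf
      · have hvni : v ∉ fib U c i := fun h => hicv ((mem_fib.1 h).2.symm)
        have hwni : w ∉ fib U c i := fun h => hij ((mem_fib.1 h).2.symm.trans (mem_fib.1 hwj).2)
        rw [fixed_of_not_mem hvni hwni] at hx hy
        exact (pcol_iff.1 hc.1) i x hx y hy
  · rw [image_swap hv hw]
    exact hc.2

lemma fib_swap_cv (hv : v ∈ U) (hw : w ∈ U)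
    (hsv : fib U c (c v) = {v}) :
    fib U (c ∘ (Equiv.swap v w)) (c v) = {w} := by
  rw [fib_swap hv hw, hsv]
  simp

lemma fib_swap_other (hv : v ∈ U) (hw : w ∈ U) {u : V} {i : ℕ}
    (hfib : fib U c i = {u}) (huv : u ≠ v) (huw : u ≠ w) :
    fib U (c ∘ (Equiv.swap v w)) i = {u} := by
  rw [fib_swap hv hw, hfib]
  simp [Equiv.swap_apply_of_ne_of_ne huv huw]

end Swap

end Moves

end Aux
namespace Aux

set_option linter.unusedSectionVars false

section Count

variable {G : SimpleGraph V} [DecidableRel G.Adj] {U : Finset V} {c : V → ℕ}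

/-- colors of singleton classes -/
def SingC (U : Finset V) (c : V → ℕ) : Finset ℕ :=
  (U.image c).filter (fun i => (fib U c i).card = 1)

/-- vertices forming singleton classes -/
def SingV (U : Finset V) (c : V → ℕ) : Finset V :=
  U.filter (fun v => (fib U c (c v)).card = 1)

/-- lonely classes of a vertex: non-singleton classes where it has exactly one neighbor -/
def LClasses (G : SimpleGraph V) [DecidableRel G.Adj] (U : Finset V) (c : V → ℕ) (v : V) :
    Finset ℕ :=
  (U.image c).filter
    (fun i => (fib U c i).card ≠ 1 ∧ (fib U c i ∩ G.neighborFinset v).card = 1)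

lemma singV_fib {v : V} (hv : v ∈ SingV U c) : fib U c (c v) = {v} := by
  obtain ⟨hvU, hcard⟩ := Finset.mem_filter.1 hv
  obtain ⟨a, ha⟩ := Finset.card_eq_one.1 hcard
  have : v ∈ fib U c (c v) := mem_fib.2 ⟨hvU, rfl⟩
  rw [ha, Finset.mem_singleton] at this
  rw [ha, this]

lemma singV_mem_U {v : V} (hv : v ∈ SingV U c) : v ∈ U := (Finset.mem_filter.1 hv).1

lemma mem_singV_of_fib {v : V} (hvU : v ∈ U) (h : fib U c (c v) = {v}) :
    v ∈ SingV U c := Finset.mem_filter.2 ⟨hvU, by rw [h]; simp⟩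

lemma card_singV : (SingV U c).card = (SingC U c).card := by
  apply Finset.card_bij (fun v _ => c v)
  · intro v hv
    exact Finset.mem_filter.2 ⟨Finset.mem_image_of_mem c (singV_mem_U hv),
      (Finset.mem_filter.1 hv).2⟩
  · intro u hu v hv heq
    have h1 : u ∈ fib U c (c v) := mem_fib.2 ⟨singV_mem_U hu, heq⟩
    rw [singV_fib hv, Finset.mem_singleton] at h1
    exact h1
  · intro i hi
    obtain ⟨hiK, hcard⟩ := Finset.mem_filter.1 hi
    obtain ⟨a, ha⟩ := Finset.card_eq_one.1 hcard
    have haU : a ∈ U ∧ c a = i := mem_fib.1 (ha ▸ Finset.mem_singleton_self a)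
    refine ⟨a, Finset.mem_filter.2 ⟨haU.1, ?_⟩, haU.2⟩
    rw [haU.2, ha]
    simp

/-- distinct singleton vertices are pairwise adjacent -/
lemma singV_pairwise_adj (hc : OptP G U c) {u v : V}
    (hu : u ∈ SingV U c) (hv : v ∈ SingV U c) (huv : u ≠ v) : G.Adj u v :=
  singletons_adj hc (singV_mem_U hu) (singV_mem_U hv) (singV_fib hu) (singV_fib hv) huv

/-- the key counting bound: a singleton vertex has many lonely classes -/
lemma lonely_count (hc : OptP G U c) {v : V} (hv : v ∈ SingV U c) :
    2 * (U.image c).card ≤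
      (G.neighborFinset v ∩ U).card + (SingC U c).card + (LClasses G U c v).card + 1 := by
  classical
  set K := U.image c with hK
  set e : ℕ → ℕ := fun i => (fib U c i ∩ G.neighborFinset v).card with he
  have hvU : v ∈ U := singV_mem_U hv
  have hfibv : fib U c (c v) = {v} := singV_fib hv
  have hcvK : c v ∈ K := Finset.mem_image_of_mem c hvU
  have hsum : ∑ i ∈ K, e i = (G.neighborFinset v ∩ U).card := by
    rw [Finset.card_eq_sum_card_fiberwise
      (f := c) (t := K) (fun x hx => Finset.mem_image_of_mem c (Finset.mem_inter.1 hx).2)]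
    apply Finset.sum_congr rfl
    intro i _
    simp only [he]
    congr 1
    ext x
    simp only [mem_fib, Finset.mem_inter, Finset.mem_filter, SimpleGraph.mem_neighborFinset]
    tauto
  have hecv : e (c v) = 0 := by
    have hemp : fib U c (c v) ∩ G.neighborFinset v = ∅ := by
      rw [hfibv]
      ext x
      simp only [Finset.mem_inter, Finset.mem_singleton, SimpleGraph.mem_neighborFinset,
        Finset.notMem_empty, iff_false, not_and]
      rintro rfl
      exact G.irrefl
    simp only [he, hemp, Finset.card_empty]
  have hsum' : ∑ i ∈ K.erase (c v), e i = (G.neighborFinset v ∩ U).card := by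
    rw [← hsum, ← Finset.add_sum_erase K e hcvK, hecv, zero_add]
  have hge1 : ∀ i ∈ K.erase (c v), 1 ≤ e i := by
    intro i hi
    obtain ⟨hine, hiK⟩ := Finset.mem_erase.1 hi
    have := singleton_hits hc hvU hfibv hiK hine
    rwa [← Finset.card_pos] at this
  set P3 := (K.erase (c v)).filter (fun i => (fib U c i).card ≠ 1 ∧ e i ≠ 1) with hP3
  set P12 := (K.erase (c v)).filter (fun i => ¬((fib U c i).card ≠ 1 ∧ e i ≠ 1)) with hP12
  have hsplit : P3.card + P12.card = (K.erase (c v)).card :=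
    Finset.card_filter_add_card_filter_not _
  have hunion : ∑ i ∈ K.erase (c v), e i = ∑ i ∈ P3, e i + ∑ i ∈ P12, e i :=
    (Finset.sum_filter_add_sum_filter_not _ _ _).symm
  have hS3 : 2 * P3.card ≤ ∑ i ∈ P3, e i := by
    have h2 : ∀ i ∈ P3, 2 ≤ e i := by
      intro i hi
      obtain ⟨hi1, _, hi3⟩ := Finset.mem_filter.1 hi
      have := hge1 i hi1
      omega
    calc 2 * P3.card = P3.card • 2 := by rw [smul_eq_mul, mul_comm]
    _ ≤ ∑ i ∈ P3, e i := Finset.card_nsmul_le_sum P3 e 2 h2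
  have hS12 : P12.card ≤ ∑ i ∈ P12, e i := by
    calc P12.card = P12.card • 1 := by rw [smul_eq_mul, mul_one]
    _ ≤ ∑ i ∈ P12, e i := Finset.card_nsmul_le_sum P12 e 1
        (fun i hi => hge1 i (Finset.mem_filter.1 hi).1)
  have herase1 : (K.erase (c v)).card + 1 = K.card := Finset.card_erase_add_one hcvK
  have hcvSing : c v ∈ SingC U c := Finset.mem_filter.2 ⟨hcvK, by rw [hfibv]; simp⟩
  have hsing1 : ((SingC U c).erase (c v)).card + 1 = (SingC U c).card :=
    Finset.card_erase_add_one hcvSing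
  have hP12sub : P12 ⊆ ((SingC U c).erase (c v)) ∪ LClasses G U c v := by
    intro i hi
    obtain ⟨hi1, hi2⟩ := Finset.mem_filter.1 hi
    obtain ⟨hine, hiK⟩ := Finset.mem_erase.1 hi1
    rw [not_and_or, not_not, not_not] at hi2
    rcases hi2 with h | h
    · exact Finset.mem_union_left _ (Finset.mem_erase.2 ⟨hine,
        Finset.mem_filter.2 ⟨hiK, h⟩⟩)
    · by_cases hfib1 : (fib U c i).card = 1
      · exact Finset.mem_union_left _ (Finset.mem_erase.2 ⟨hine,
          Finset.mem_filter.2 ⟨hiK, hfib1⟩⟩)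
      · exact Finset.mem_union_right _ (Finset.mem_filter.2 ⟨hiK, hfib1, h⟩)
  have hP12le : P12.card ≤ ((SingC U c).erase (c v)).card + (LClasses G U c v).card :=
    le_trans (Finset.card_le_card hP12sub) (Finset.card_union_le _ _)
  omega

/-- inside `U = univ \ A`:  |N(v) ∩ U| + |N(v) ∩ A| = deg v -/
lemma nbr_split (A : Finset V) (v : V) :
    (G.neighborFinset v ∩ (Finset.univ \ A)).card + (G.neighborFinset v ∩ A).card =
      (G.neighborFinset v).card := by
  have h1 : G.neighborFinset v ∩ (Finset.univ \ A) = G.neighborFinset v \ A := by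
    ext x
    simp only [Finset.mem_inter, Finset.mem_sdiff, Finset.mem_univ, true_and]
  rw [h1]
  exact Finset.card_sdiff_add_card_inter _ A

end Count

end Aux
namespace Aux

set_option linter.unusedSectionVars false

/-- greedy selection of a system of distinct representatives -/
lemma selection : ∀ (m : ℕ) (L : V → Finset ℕ) (S : Finset V),
    (∀ z ∈ S, m ≤ (L z).card) → m ≤ S.card →
    ∃ T : Finset (V × ℕ), T.card = m ∧
      (∀ p ∈ T, p.1 ∈ S ∧ p.2 ∈ L p.1) ∧
      (∀ p ∈ T, ∀ r ∈ T, p ≠ r → p.1 ≠ r.1 ∧ p.2 ≠ r.2) := by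
  intro m
  induction m with
  | zero => exact fun L S _ _ => ⟨∅, by simp, by simp, by simp⟩
  | succ n ih =>
    intro L S hL hS
    obtain ⟨z, hz⟩ : S.Nonempty := Finset.card_pos.1 (by omega)
    obtain ⟨j, hj⟩ : (L z).Nonempty := Finset.card_pos.1 (by have := hL z hz; omega)
    obtain ⟨T', h1, h2, h3⟩ := ih (fun x => (L x).erase j) (S.erase z)
      (fun x hx => by
        show n ≤ ((L x).erase j).card
        have h := hL x (Finset.mem_of_mem_erase hx)
        have h' := Finset.pred_card_le_card_erase (s := L x) (a := j)
        omega)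
      (by
        have h' := Finset.pred_card_le_card_erase (s := S) (a := z)
        omega)
    have hnotmem : (z, j) ∉ T' := by
      intro hmem
      have := (h2 _ hmem).1
      simp only at this
      exact (Finset.mem_erase.1 this).1 rfl
    refine ⟨insert (z, j) T', ?_, ?_, ?_⟩
    · rw [Finset.card_insert_of_notMem hnotmem, h1]
    · intro p hp
      rcases Finset.mem_insert.1 hp with rfl | hp
      · exact ⟨hz, hj⟩
      · exact ⟨Finset.mem_of_mem_erase (h2 p hp).1, Finset.mem_of_mem_erase (h2 p hp).2⟩
    · intro p hp r hr hpr
      rcases Finset.mem_insert.1 hp with rfl | hp <;> rcases Finset.mem_insert.1 hr with h' | hr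
      · exact absurd h'.symm hpr
      · have := h2 r hr
        exact ⟨fun h => (Finset.mem_erase.1 this.1).1 h.symm,
               fun h => (Finset.mem_erase.1 this.2).1 h.symm⟩
      · rw [h']
        have := h2 p hp
        exact ⟨fun h => (Finset.mem_erase.1 this.1).1 h,
               fun h => (Finset.mem_erase.1 this.2).1 h⟩
      · exact h3 p hp r hr hpr

section Targets

variable {G : SimpleGraph V} [DecidableRel G.Adj] {U : Finset V} {c : V → ℕ}

/-- the target of a lonely pair `(v, i)`: the unique neighbor of `v` in class `i` -/
noncomputable def tg (G : SimpleGraph V) [DecidableRel G.Adj] (U : Finset V) (c : V → ℕ)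
    (v : V) (i : ℕ) : V :=
  if h : (fib U c i ∩ G.neighborFinset v).Nonempty then h.choose else v

lemma tg_spec {v : V} {i : ℕ} (h : (fib U c i ∩ G.neighborFinset v).card = 1) :
    fib U c i ∩ G.neighborFinset v = {tg G U c v i} := by
  obtain ⟨w, hw⟩ := Finset.card_eq_one.1 h
  have hne : (fib U c i ∩ G.neighborFinset v).Nonempty := by
    rw [hw]; exact ⟨w, Finset.mem_singleton_self w⟩
  have hch : tg G U c v i ∈ fib U c i ∩ G.neighborFinset v := by
    rw [tg, dif_pos hne]
    exact hne.choose_spec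
  rw [hw] at hch ⊢
  rw [Finset.mem_singleton.1 hch]

lemma lclass_spec {v : V} {i : ℕ} (hi : i ∈ LClasses G U c v) :
    i ∈ U.image c ∧ (fib U c i).card ≠ 1 ∧ (fib U c i ∩ G.neighborFinset v).card = 1 := by
  have := Finset.mem_filter.1 hi
  exact ⟨this.1, this.2.1, this.2.2⟩

lemma tg_lonely {v : V} {i : ℕ} (hi : i ∈ LClasses G U c v) :
    fib U c i ∩ G.neighborFinset v = {tg G U c v i} :=
  tg_spec (lclass_spec hi).2.2

lemma tg_basic {v : V} {i : ℕ} (hi : i ∈ LClasses G U c v) :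
    tg G U c v i ∈ U ∧ c (tg G U c v i) = i ∧ G.Adj v (tg G U c v i) := by
  have hmem : tg G U c v i ∈ fib U c i ∩ G.neighborFinset v :=
    (tg_lonely hi) ▸ Finset.mem_singleton_self _
  obtain ⟨h1, h2⟩ := Finset.mem_inter.1 hmem
  exact ⟨(mem_fib.1 h1).1, (mem_fib.1 h1).2,
    (SimpleGraph.mem_neighborFinset G v _).1 h2⟩

lemma tg_not_singV {v : V} {i : ℕ} (hi : i ∈ LClasses G U c v) :
    tg G U c v i ∉ SingV U c := by
  intro h
  have h2 := (Finset.mem_filter.1 h).2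
  rw [(tg_basic hi).2.1] at h2
  exact (lclass_spec hi).2.1 h2

lemma singV_color_ne {u : V} (hu : u ∈ SingV U c) {i : ℕ}
    (hne1 : (fib U c i).card ≠ 1) : c u ≠ i := by
  intro h
  rw [← h] at hne1
  exact hne1 (Finset.mem_filter.1 hu).2

lemma tg_ne_singV {v : V} {i : ℕ} (hi : i ∈ LClasses G U c v) {u : V}
    (hu : u ∈ SingV U c) : tg G U c v i ≠ u := by
  intro h
  exact tg_not_singV hi (h ▸ hu)

/-- the swapped coloring for a lonely pair, with its singleton structure -/
lemma swap_structure (hc : OptP G U c) {v : V} {i : ℕ}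
    (hv : v ∈ SingV U c) (hi : i ∈ LClasses G U c v) :
    OptP G U (c ∘ Equiv.swap v (tg G U c v i)) ∧
    fib U (c ∘ Equiv.swap v (tg G U c v i)) (c v) = {tg G U c v i} ∧
    (∀ u ∈ SingV U c, u ≠ v → fib U (c ∘ Equiv.swap v (tg G U c v i)) (c u) = {u}) := by
  set w := tg G U c v i with hw
  have hvU : v ∈ U := singV_mem_U hv
  have hwU : w ∈ U := (tg_basic hi).1
  have hfibv : fib U c (c v) = {v} := singV_fib hv
  have hlon : fib U c i ∩ G.neighborFinset v = {w} := tg_lonely hi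
  refine ⟨optP_swap hc hvU hfibv hlon, fib_swap_cv hvU hwU hfibv, ?_⟩
  intro u hu huv
  exact fib_swap_other hvU hwU (singV_fib hu) huv (fun h => tg_ne_singV hi hu h.symm)

/-- T1 : a target is adjacent to every other singleton vertex -/
lemma tg_adj_singV (hc : OptP G U c) {v : V} {i : ℕ}
    (hv : v ∈ SingV U c) (hi : i ∈ LClasses G U c v) {u : V}
    (hu : u ∈ SingV U c) (huv : u ≠ v) : G.Adj (tg G U c v i) u := by
  set w := tg G U c v i with hw
  obtain ⟨hopt, hfw, hfo⟩ := swap_structure hc hv hi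
  set c₁ := c ∘ Equiv.swap v w with hc₁
  have hwU : w ∈ U := (tg_basic hi).1
  have hc₁w : c₁ w = c v := by
    simp only [hc₁, Function.comp_apply, Equiv.swap_apply_right]
  have hc₁u : c₁ u = c u := by
    simp only [hc₁, Function.comp_apply]
    rw [Equiv.swap_apply_of_ne_of_ne huv (fun h => tg_ne_singV hi hu h.symm)]
  apply singletons_adj hopt hwU (singV_mem_U hu)
  · rw [hc₁w]; exact hfw
  · rw [hc₁u]; exact hfo u hu huv
  · exact fun h => tg_ne_singV hi hu h

/-- targets in different classes are distinct -/
lemma tg_ne_tg {v₁ v₂ : V} {i₁ i₂ : ℕ} (hi₁ : i₁ ∈ LClasses G U c v₁)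
    (hi₂ : i₂ ∈ LClasses G U c v₂) (hii : i₁ ≠ i₂) :
    tg G U c v₁ i₁ ≠ tg G U c v₂ i₂ := by
  intro h
  have h1 := (tg_basic hi₁).2.1
  have h2 := (tg_basic hi₂).2.1
  rw [h] at h1
  exact hii (h1.symm.trans h2)

/-- T3 : targets of distinct singletons in distinct classes are adjacent -/
lemma tg_adj_tg (hc : OptP G U c) {v₁ v₂ : V} {i₁ i₂ : ℕ}
    (hv₁ : v₁ ∈ SingV U c) (hi₁ : i₁ ∈ LClasses G U c v₁)
    (hv₂ : v₂ ∈ SingV U c) (hi₂ : i₂ ∈ LClasses G U c v₂)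
    (hvv : v₁ ≠ v₂) (hii : i₁ ≠ i₂) :
    G.Adj (tg G U c v₁ i₁) (tg G U c v₂ i₂) := by
  set w₁ := tg G U c v₁ i₁ with hw₁
  set w₂ := tg G U c v₂ i₂ with hw₂
  obtain ⟨hopt₁, hfw₁, hfo₁⟩ := swap_structure hc hv₁ hi₁
  set c₁ := c ∘ Equiv.swap v₁ w₁ with hc₁
  have hv₁U : v₁ ∈ U := singV_mem_U hv₁
  have hv₂U : v₂ ∈ U := singV_mem_U hv₂
  have hw₁U : w₁ ∈ U := (tg_basic hi₁).1
  have hw₂U : w₂ ∈ U := (tg_basic hi₂).1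
  have hv₂w₁ : v₂ ≠ w₁ := fun h => tg_ne_singV hi₁ hv₂ h.symm
  have hv₂w₂ : v₂ ≠ w₂ := fun h => tg_ne_singV hi₂ hv₂ h.symm
  have hw₁w₂ : w₁ ≠ w₂ := tg_ne_tg hi₁ hi₂ hii
  -- class i₂ is untouched by the first swap
  have hfib₂ : fib U c₁ i₂ = fib U c i₂ := by
    rw [hc₁, fib_swap hv₁U hw₁U]
    apply fixed_of_not_mem
    · intro h
      exact singV_color_ne hv₁ (lclass_spec hi₂).2.1 (mem_fib.1 h).2
    · intro h
      exact hii ((tg_basic hi₁).2.1.symm.trans (mem_fib.1 h).2)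
  have hc₁v₂ : c₁ v₂ = c v₂ := by
    simp only [hc₁, Function.comp_apply]
    rw [Equiv.swap_apply_of_ne_of_ne hvv.symm hv₂w₁]
  have hsing₂ : fib U c₁ (c₁ v₂) = {v₂} := by
    rw [hc₁v₂]
    exact hfo₁ v₂ hv₂ hvv.symm
  have hlon₂ : fib U c₁ i₂ ∩ G.neighborFinset v₂ = {w₂} := by
    rw [hfib₂]
    exact tg_lonely hi₂
  have hopt₂ : OptP G U (c₁ ∘ Equiv.swap v₂ w₂) := optP_swap hopt₁ hv₂U hsing₂ hlon₂
  set c₂ := c₁ ∘ Equiv.swap v₂ w₂ with hc₂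
  have hfibw₂ : fib U c₂ (c₁ v₂) = {w₂} := fib_swap_cv hv₂U hw₂U hsing₂
  have hfibw₁ : fib U c₂ (c v₁) = {w₁} :=
    fib_swap_other hv₂U hw₂U hfw₁ hv₂w₁.symm hw₁w₂
  have hc₂w₁ : c₂ w₁ = c v₁ := by
    simp only [hc₂, hc₁, Function.comp_apply]
    rw [Equiv.swap_apply_of_ne_of_ne hv₂w₁.symm hw₁w₂, Equiv.swap_apply_right]
  have hc₂w₂ : c₂ w₂ = c v₂ := by
    simp only [hc₂, Function.comp_apply]
    rw [Equiv.swap_apply_right, hc₁v₂]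
  apply singletons_adj hopt₂ hw₁U hw₂U
  · rw [hc₂w₁]; exact hfibw₁
  · rw [hc₂w₂, ← hc₁v₂]; exact hfibw₂
  · exact hw₁w₂

end Targets

end Aux
namespace Aux

set_option linter.unusedSectionVars false

section BadCase

variable {G : SimpleGraph V} [DecidableRel G.Adj] {A : Finset V} {c : V → ℕ}

lemma clique_singV {U : Finset V} (hc : OptP G U c) : G.IsClique ↑(SingV U c) := by
  rw [SimpleGraph.isClique_iff]
  intro u hu v hv huv
  exact singV_pairwise_adj hc (Finset.mem_coe.1 hu) (Finset.mem_coe.1 hv) huv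

lemma singC_le_cliqueNum {U : Finset V} (hc : OptP G U c) :
    (SingC U c).card ≤ G.cliqueNum := by
  rw [← card_singV]
  exact (clique_singV hc).card_le_cliqueNum

/-- a system of lonely pairs with distinct owners and classes yields a large clique -/
lemma system_clique {U : Finset V} (hc : OptP G U c) (T : Finset (V × ℕ))
    (hT : ∀ p ∈ T, p.1 ∈ SingV U c ∧ p.2 ∈ LClasses G U c p.1)
    (hinj : ∀ p ∈ T, ∀ r ∈ T, p ≠ r → p.1 ≠ r.1 ∧ p.2 ≠ r.2) :
    G.IsClique ↑(SingV U c ∪ T.image (fun p => tg G U c p.1 p.2)) ∧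
    (SingV U c ∪ T.image (fun p => tg G U c p.1 p.2)).card = (SingV U c).card + T.card := by
  have htg_inj : ∀ p ∈ T, ∀ r ∈ T, p ≠ r →
      tg G U c p.1 p.2 ≠ tg G U c r.1 r.2 := by
    intro p hp r hr hpr
    exact tg_ne_tg (hT p hp).2 (hT r hr).2 (hinj p hp r hr hpr).2
  constructor
  · rw [SimpleGraph.isClique_iff]
    intro x hx y hy hxy
    simp only [Finset.coe_union, Set.mem_union, Finset.mem_coe, Finset.coe_image,
      Set.mem_image] at hx hy
    rcases hx with hx | ⟨p, hp, rfl⟩ <;> rcases hy with hy | ⟨r, hr, rfl⟩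
    · exact singV_pairwise_adj hc hx hy hxy
    · obtain ⟨hr1, hr2⟩ := hT r (Finset.mem_coe.1 hr)
      by_cases hxr : x = r.1
      · rw [hxr]
        exact (tg_basic hr2).2.2
      · exact (tg_adj_singV hc hr1 hr2 hx hxr).symm
    · obtain ⟨hp1, hp2⟩ := hT p (Finset.mem_coe.1 hp)
      by_cases hyp : y = p.1
      · rw [hyp]
        exact (tg_basic hp2).2.2.symm
      · exact tg_adj_singV hc hp1 hp2 hy hyp
    · have hpr : p ≠ r := by
        intro h
        exact hxy (by rw [h])
      have hpT := Finset.mem_coe.1 hp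
      have hrT := Finset.mem_coe.1 hr
      exact tg_adj_tg hc (hT p hpT).1 (hT p hpT).2 (hT r hrT).1 (hT r hrT).2
        (hinj p hpT r hrT hpr).1 (hinj p hpT r hrT hpr).2
  · rw [Finset.card_union_of_disjoint, Finset.card_image_of_injOn]
    · intro p hp r hr h
      by_contra hpr
      exact htg_inj p hp r hr hpr h
    · rw [Finset.disjoint_right]
      intro x hx
      obtain ⟨p, hp, rfl⟩ := Finset.mem_image.1 hx
      exact tg_not_singV (hT p hp).2

/-- the lower bound on the number of lonely classes of each singleton vertex -/
lemma lambda_lb (hAm : ∀ z, z ∉ A → ∃ a ∈ A, G.Adj z a)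
    (hω2k : G.cliqueNum + G.maxDegree ≤ 2 * chiP G (Finset.univ \ A))
    (hc : OptP G (Finset.univ \ A) c) {v : V} (hv : v ∈ SingV (Finset.univ \ A) c) :
    G.cliqueNum ≤ (SingC (Finset.univ \ A) c).card + (LClasses G (Finset.univ \ A) c v).card := by
  have h1 := lonely_count hc hv
  rw [hc.2] at h1
  have h2 := nbr_split (G := G) A v
  have h3 : (G.neighborFinset v).card ≤ G.maxDegree := by
    rw [SimpleGraph.card_neighborFinset_eq_degree]
    exact G.degree_le_maxDegree v
  have h4 : 1 ≤ (G.neighborFinset v ∩ A).card := by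
    have hvU := singV_mem_U hv
    have hvA : v ∉ A := by
      rw [Finset.mem_sdiff] at hvU
      exact hvU.2
    obtain ⟨a, ha, hadj⟩ := hAm v hvA
    exact Finset.card_pos.2 ⟨a, Finset.mem_inter.2 ⟨(SimpleGraph.mem_neighborFinset G v a).2 hadj, ha⟩⟩
  omega

/-- swaps do not change the singleton colors -/
lemma singC_swap {U : Finset V} {v w : V} (hv : v ∈ U) (hw : w ∈ U) :
    SingC U (c ∘ Equiv.swap v w) = SingC U c := by
  unfold SingC
  rw [image_swap hv hw]
  apply Finset.filter_congr
  intro i _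
  rw [card_fib_swap hv hw]

/-- the unique `A`-neighbor of a vertex -/
noncomputable def ahat (G : SimpleGraph V) [DecidableRel G.Adj] (A : Finset V) (v : V) : V :=
  if h : (G.neighborFinset v ∩ A).Nonempty then h.choose else v

lemma ahat_spec {v : V} (h : (G.neighborFinset v ∩ A).card = 1) :
    G.neighborFinset v ∩ A = {ahat G A v} := by
  obtain ⟨w, hw⟩ := Finset.card_eq_one.1 h
  have hne : (G.neighborFinset v ∩ A).Nonempty := by
    rw [hw]; exact ⟨w, Finset.mem_singleton_self w⟩
  have hch : ahat G A v ∈ G.neighborFinset v ∩ A := by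
    rw [ahat, dif_pos hne]
    exact hne.choose_spec
  rw [hw] at hch ⊢
  rw [Finset.mem_singleton.1 hch]

lemma ahat_mem {v : V} (h : (G.neighborFinset v ∩ A).card = 1) :
    G.Adj v (ahat G A v) ∧ ahat G A v ∈ A := by
  have := ahat_spec h ▸ Finset.mem_singleton_self (ahat G A v)
  obtain ⟨h1, h2⟩ := Finset.mem_inter.1 this
  exact ⟨(SimpleGraph.mem_neighborFinset G v _).1 h1, h2⟩

end BadCase

end Aux
namespace Aux

set_option linter.unusedSectionVars false

section BadCase2

variable {G : SimpleGraph V} [DecidableRel G.Adj] {A : Finset V} {c : V → ℕ}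

lemma no_rich (hAm : ∀ z, z ∉ A → ∃ a ∈ A, G.Adj z a)
    (hω2k : G.cliqueNum + G.maxDegree ≤ 2 * chiP G (Finset.univ \ A))
    (hc : OptP G (Finset.univ \ A) c)
    (hbad : G.cliqueNum + 2 ≤ 2 * (SingC (Finset.univ \ A) c).card) :
    ∀ v ∈ SingV (Finset.univ \ A) c,
      (SingC (Finset.univ \ A) c).card + (LClasses G (Finset.univ \ A) c v).card ≤
        G.cliqueNum := by
  intro zs hzs
  by_contra hrich
  push_neg at hrich
  have hsle : (SingC (Finset.univ \ A) c).card ≤ G.cliqueNum := singC_le_cliqueNum hc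
  have hSV : (SingV (Finset.univ \ A) c).card = (SingC (Finset.univ \ A) c).card :=
    card_singV
  have herase : ((SingV (Finset.univ \ A) c).erase zs).card + 1 =
      (SingV (Finset.univ \ A) c).card := Finset.card_erase_add_one hzs
  obtain ⟨T', hT'c, hT'mem, hT'inj⟩ := selection
      (G.cliqueNum - (SingC (Finset.univ \ A) c).card)
      (fun z => LClasses G (Finset.univ \ A) c z)
      ((SingV (Finset.univ \ A) c).erase zs)
      (fun z hz => by
        show G.cliqueNum - (SingC (Finset.univ \ A) c).card ≤
          (LClasses G (Finset.univ \ A) c z).card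
        have := lambda_lb hAm hω2k hc (Finset.mem_of_mem_erase hz)
        omega)
      (by omega)
  have himg : (T'.image Prod.snd).card ≤ G.cliqueNum - (SingC (Finset.univ \ A) c).card :=
    le_trans Finset.card_image_le (le_of_eq hT'c)
  have hLzs : G.cliqueNum - (SingC (Finset.univ \ A) c).card + 1 ≤
      (LClasses G (Finset.univ \ A) c zs).card := by omega
  have hdiff : ((LClasses G (Finset.univ \ A) c zs) \ T'.image Prod.snd).Nonempty := by
    have := Finset.card_le_card_sdiff_add_card (s := LClasses G (Finset.univ \ A) c zs)
      (t := T'.image Prod.snd)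
    rw [← Finset.card_pos]
    omega
  obtain ⟨js, hjs⟩ := hdiff
  obtain ⟨hjs1, hjs2⟩ := Finset.mem_sdiff.1 hjs
  have hnotmem : (zs, js) ∉ T' := by
    intro h
    exact (Finset.mem_erase.1 (hT'mem _ h).1).1 rfl
  have hTmem : ∀ p ∈ insert (zs, js) T',
      p.1 ∈ SingV (Finset.univ \ A) c ∧ p.2 ∈ LClasses G (Finset.univ \ A) c p.1 := by
    intro p hp
    rcases Finset.mem_insert.1 hp with rfl | hp
    · exact ⟨hzs, hjs1⟩
    · exact ⟨Finset.mem_of_mem_erase (hT'mem p hp).1, (hT'mem p hp).2⟩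
  have hTinj : ∀ p ∈ insert (zs, js) T', ∀ r ∈ insert (zs, js) T',
      p ≠ r → p.1 ≠ r.1 ∧ p.2 ≠ r.2 := by
    intro p hp r hr hpr
    rcases Finset.mem_insert.1 hp with rfl | hp <;> rcases Finset.mem_insert.1 hr with h' | hr
    · exact absurd h'.symm hpr
    · constructor
      · exact fun h => (Finset.mem_erase.1 (hT'mem r hr).1).1 h.symm
      · intro h
        exact hjs2 (Finset.mem_image.2 ⟨r, hr, h.symm⟩)
    · rw [h']
      constructor
      · exact fun h => (Finset.mem_erase.1 (hT'mem p hp).1).1 h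
      · intro h
        exact hjs2 (Finset.mem_image.2 ⟨p, hp, h⟩)
    · exact hT'inj p hp r hr hpr
  have hTcard : (insert (zs, js) T').card =
      G.cliqueNum - (SingC (Finset.univ \ A) c).card + 1 := by
    rw [Finset.card_insert_of_notMem hnotmem, hT'c]
  obtain ⟨hcl, hcard2⟩ := system_clique hc (insert (zs, js) T') hTmem hTinj
  have hle := hcl.card_le_cliqueNum
  rw [hcard2] at hle
  omega

lemma tight (hAm : ∀ z, z ∉ A → ∃ a ∈ A, G.Adj z a)
    (hω2k : G.cliqueNum + G.maxDegree ≤ 2 * chiP G (Finset.univ \ A))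
    (hc : OptP G (Finset.univ \ A) c)
    (hbad : G.cliqueNum + 2 ≤ 2 * (SingC (Finset.univ \ A) c).card) :
    2 * chiP G (Finset.univ \ A) = G.cliqueNum + G.maxDegree ∧
    ∀ v ∈ SingV (Finset.univ \ A) c, (G.neighborFinset v ∩ A).card = 1 := by
  have key : ∀ v ∈ SingV (Finset.univ \ A) c,
      2 * chiP G (Finset.univ \ A) = G.cliqueNum + G.maxDegree ∧
      (G.neighborFinset v ∩ A).card = 1 := by
    intro v hv
    have h1 := lonely_count hc hv
    rw [hc.2] at h1
    have h2 := nbr_split (G := G) A v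
    have h3 : (G.neighborFinset v).card ≤ G.maxDegree := by
      rw [SimpleGraph.card_neighborFinset_eq_degree]
      exact G.degree_le_maxDegree v
    have h4 : 1 ≤ (G.neighborFinset v ∩ A).card := by
      have hvU := singV_mem_U hv
      have hvA : v ∉ A := (Finset.mem_sdiff.1 hvU).2
      obtain ⟨a, ha, hadj⟩ := hAm v hvA
      exact Finset.card_pos.2
        ⟨a, Finset.mem_inter.2 ⟨(SimpleGraph.mem_neighborFinset G v a).2 hadj, ha⟩⟩
    have h5 := no_rich hAm hω2k hc hbad v hv
    constructor <;> omega
  have hs1 : 1 ≤ (SingV (Finset.univ \ A) c).card := by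
    rw [card_singV]
    omega
  obtain ⟨v, hv⟩ := Finset.card_pos.1 hs1
  exact ⟨(key v hv).1, fun u hu => (key u hu).2⟩

end BadCase2

end Aux
namespace Aux

set_option linter.unusedSectionVars false

section BadCase3

variable {G : SimpleGraph V} [DecidableRel G.Adj] {A : Finset V} {c : V → ℕ}

/-- moving the unique `A`-neighbor of a singleton into the coloring:
the swapped-in vertex is adjacent to all the other singletons -/
lemma swa (hA : Indep G A)
    (hchi : chi G = chiP G (Finset.univ \ A) + 1)
    (hc : OptP G (Finset.univ \ A) c) {v : V} (hv : v ∈ SingV (Finset.univ \ A) c)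
    (ha1 : (G.neighborFinset v ∩ A).card = 1) :
    ∀ u ∈ SingV (Finset.univ \ A) c, G.Adj (ahat G A v) u := by
  intro u hu
  obtain ⟨hadjaa, haaA⟩ := ahat_mem (A := A) ha1
  set aa := ahat G A v with haa
  by_cases huv : u = v
  · rw [huv]; exact hadjaa.symm
  have hvU : v ∈ Finset.univ \ A := singV_mem_U hv
  have hvA : v ∉ A := (Finset.mem_sdiff.1 hvU).2
  have haav : aa ≠ v := fun h => hvA (h ▸ haaA)
  have huU : u ∈ Finset.univ \ A := singV_mem_U hu
  have huA : u ∉ A := (Finset.mem_sdiff.1 huU).2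
  have huaa : u ≠ aa := fun h => huA (h ▸ haaA)
  have hcucv : c u ≠ c v := by
    intro h
    have h2 : u ∈ fib (Finset.univ \ A) c (c v) := mem_fib.2 ⟨huU, h⟩
    rw [singV_fib hv, Finset.mem_singleton] at h2
    exact huv h2
  set A' := insert v (A.erase aa) with hA'
  have hA'indep : Indep G A' := by
    intro x hx y hy
    have hnbr : ∀ z, z ∈ A.erase aa → ¬ G.Adj v z := by
      intro z hz hadj
      have : z ∈ G.neighborFinset v ∩ A := Finset.mem_inter.2
        ⟨(SimpleGraph.mem_neighborFinset G v z).2 hadj, Finset.mem_of_mem_erase hz⟩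
      rw [ahat_spec ha1, Finset.mem_singleton] at this
      exact (Finset.mem_erase.1 hz).1 this
    rcases Finset.mem_insert.1 hx with h1 | h1 <;> rcases Finset.mem_insert.1 hy with h2 | h2
    · rw [h1, h2]; exact G.irrefl
    · rw [h1]; exact hnbr y h2
    · rw [h2]; exact fun h => hnbr x h1 h.symm
    · exact hA x (Finset.mem_of_mem_erase h1) y (Finset.mem_of_mem_erase h2)
  have hA'ne : A'.Nonempty := ⟨v, Finset.mem_insert_self _ _⟩
  have hU'mem : ∀ x, x ∈ Finset.univ \ A' ↔ ((x ∈ Finset.univ \ A ∧ x ≠ v) ∨ x = aa) := by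
    intro x
    constructor
    · intro hx
      have hx2 := (Finset.mem_sdiff.1 hx).2
      rw [hA'] at hx2
      by_cases hxaa : x = aa
      · exact Or.inr hxaa
      · left
        constructor
        · rw [Finset.mem_sdiff]
          refine ⟨Finset.mem_univ x, fun hxA => hx2 ?_⟩
          exact Finset.mem_insert_of_mem (Finset.mem_erase.2 ⟨hxaa, hxA⟩)
        · exact fun h => hx2 (by rw [h]; exact Finset.mem_insert_self v _)
    · intro hx
      rw [Finset.mem_sdiff]
      refine ⟨Finset.mem_univ x, fun hxA' => ?_⟩
      rw [hA'] at hxA'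
      rcases Finset.mem_insert.1 hxA' with h | h
      · rcases hx with ⟨_, hxv⟩ | hxaa
        · exact hxv h
        · exact haav (hxaa ▸ h)
      · rcases hx with ⟨hxU, _⟩ | hxaa
        · exact (Finset.mem_sdiff.1 hxU).2 (Finset.mem_of_mem_erase h)
        · exact (Finset.mem_erase.1 h).1 hxaa
  have haaU' : aa ∈ Finset.univ \ A' := (hU'mem aa).2 (Or.inr rfl)
  have huU' : u ∈ Finset.univ \ A' := (hU'mem u).2 (Or.inl ⟨huU, huv⟩)
  set c' := Function.update c aa (c v) with hc'
  have hc'aa : c' aa = c v := Function.update_self aa (c v) c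
  have hc'x : ∀ x, x ≠ aa → c' x = c x := fun x hx => Function.update_of_ne hx (c v) c
  -- membership in classes of c' over U'
  have hfib' : ∀ x, x ∈ Finset.univ \ A' → x ≠ aa →
      (x ∈ Finset.univ \ A ∧ x ≠ v ∧ c' x = c x) := by
    intro x hx hxaa
    rcases (hU'mem x).1 hx with ⟨h1, h2⟩ | h
    · exact ⟨h1, h2, hc'x x hxaa⟩
    · exact absurd h hxaa
  have hpc : PCol G (Finset.univ \ A') c' := by
    intro x hx y hy hadj heq
    by_cases hxaa : x = aa
    · have hyaa : y ≠ aa := fun h => G.irrefl (hxaa ▸ h ▸ hadj)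
      obtain ⟨hyU, hyv, hyc⟩ := hfib' y hy hyaa
      rw [hxaa, hc'aa, hyc] at heq
      have : y ∈ fib (Finset.univ \ A) c (c v) := mem_fib.2 ⟨hyU, heq.symm⟩
      rw [singV_fib hv, Finset.mem_singleton] at this
      exact hyv this
    · by_cases hyaa : y = aa
      · obtain ⟨hxU, hxv, hxc⟩ := hfib' x hx hxaa
        rw [hyaa, hc'aa, hxc] at heq
        have : x ∈ fib (Finset.univ \ A) c (c v) := mem_fib.2 ⟨hxU, heq⟩
        rw [singV_fib hv, Finset.mem_singleton] at this
        exact hxv this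
      · obtain ⟨hxU, _, hxc⟩ := hfib' x hx hxaa
        obtain ⟨hyU, _, hyc⟩ := hfib' y hy hyaa
        rw [hxc, hyc] at heq
        exact hc.1 x hxU y hyU hadj heq
  have himg : (Finset.univ \ A').image c' = (Finset.univ \ A).image c := by
    ext i
    constructor
    · intro hi
      obtain ⟨x, hx, rfl⟩ := Finset.mem_image.1 hi
      by_cases hxaa : x = aa
      · rw [hxaa, hc'aa]
        exact Finset.mem_image_of_mem c hvU
      · obtain ⟨hxU, _, hxc⟩ := hfib' x hx hxaa
        rw [hxc]
        exact Finset.mem_image_of_mem c hxU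
    · intro hi
      obtain ⟨x, hx, rfl⟩ := Finset.mem_image.1 hi
      by_cases hxv : x = v
      · refine Finset.mem_image.2 ⟨aa, haaU', ?_⟩
        rw [hc'aa, hxv]
      · have hxA : x ∉ A := (Finset.mem_sdiff.1 hx).2
        have hxaa : x ≠ aa := fun h => hxA (h ▸ haaA)
        refine Finset.mem_image.2 ⟨x, (hU'mem x).2 (Or.inl ⟨hx, hxv⟩), hc'x x hxaa⟩
  have hopt' : OptP G (Finset.univ \ A') c' := by
    constructor
    · exact hpc
    · have hle : chiP G (Finset.univ \ A') ≤ ((Finset.univ \ A).image c).card := by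
        have := chiP_le hpc
        rwa [himg] at this
      rw [hc.2] at hle
      have hge := chi_le_chiP_succ hA'indep hA'ne
      rw [hchi] at hge
      rw [himg, hc.2]
      omega
  -- singleton structure of c' on U'
  have hfibaa : fib (Finset.univ \ A') c' (c' aa) = {aa} := by
    rw [hc'aa]
    ext x
    rw [mem_fib, Finset.mem_singleton]
    constructor
    · rintro ⟨hx, hcx⟩
      by_contra hxaa
      obtain ⟨hxU, hxv, hxc⟩ := hfib' x hx hxaa
      rw [hxc] at hcx
      have : x ∈ fib (Finset.univ \ A) c (c v) := mem_fib.2 ⟨hxU, hcx⟩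
      rw [singV_fib hv, Finset.mem_singleton] at this
      exact hxv this
    · rintro rfl
      exact ⟨haaU', hc'aa⟩
  have hfibu : fib (Finset.univ \ A') c' (c' u) = {u} := by
    rw [hc'x u huaa]
    ext x
    rw [mem_fib, Finset.mem_singleton]
    constructor
    · rintro ⟨hx, hcx⟩
      by_cases hxaa : x = aa
      · rw [hxaa, hc'aa] at hcx
        exact absurd hcx.symm hcucv
      · obtain ⟨hxU, _, hxc⟩ := hfib' x hx hxaa
        rw [hxc] at hcx
        have : x ∈ fib (Finset.univ \ A) c (c u) := mem_fib.2 ⟨hxU, hcx⟩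
        rw [singV_fib hu, Finset.mem_singleton] at this
        exact this
    · intro h
      rw [h]
      exact ⟨huU', hc'x u huaa⟩
  exact singletons_adj hopt' haaU' huU' hfibaa hfibu (fun h => huaa h.symm)

end BadCase3

end Aux
namespace Aux

set_option linter.unusedSectionVars false

section BadCase4

variable {G : SimpleGraph V} [DecidableRel G.Adj] {A : Finset V} {c : V → ℕ}

/-- all singleton vertices share the same unique `A`-neighbor -/
lemma common (hA : Indep G A) (hAm : ∀ z, z ∉ A → ∃ a ∈ A, G.Adj z a)
    (hω2k : G.cliqueNum + G.maxDegree ≤ 2 * chiP G (Finset.univ \ A))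
    (hchi : chi G = chiP G (Finset.univ \ A) + 1)
    (hc : OptP G (Finset.univ \ A) c)
    (hbad : G.cliqueNum + 2 ≤ 2 * (SingC (Finset.univ \ A) c).card) :
    ∀ u ∈ SingV (Finset.univ \ A) c, ∀ v ∈ SingV (Finset.univ \ A) c,
      G.neighborFinset u ∩ A = G.neighborFinset v ∩ A := by
  obtain ⟨-, ha1⟩ := tight hAm hω2k hc hbad
  intro u hu v hv
  by_cases huv : u = v
  · rw [huv]
  have h1 := swa hA hchi hc hv (ha1 v hv) u hu
  have h2 : ahat G A v ∈ G.neighborFinset u ∩ A :=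
    Finset.mem_inter.2 ⟨(SimpleGraph.mem_neighborFinset G u _).2 h1.symm,
      (ahat_mem (ha1 v hv)).2⟩
  rw [ahat_spec (ha1 u hu), Finset.mem_singleton] at h2
  rw [ahat_spec (ha1 u hu), ahat_spec (ha1 v hv), h2]

/-- T4: each target is adjacent to the common `A`-neighbor -/
lemma t4 (hA : Indep G A) (hAm : ∀ z, z ∉ A → ∃ a ∈ A, G.Adj z a)
    (hω2k : G.cliqueNum + G.maxDegree ≤ 2 * chiP G (Finset.univ \ A))
    (hchi : chi G = chiP G (Finset.univ \ A) + 1)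
    (hc : OptP G (Finset.univ \ A) c)
    (hbad : G.cliqueNum + 2 ≤ 2 * (SingC (Finset.univ \ A) c).card)
    {v : V} (hv : v ∈ SingV (Finset.univ \ A) c)
    {i : ℕ} (hi : i ∈ LClasses G (Finset.univ \ A) c v)
    {u : V} (hu : u ∈ SingV (Finset.univ \ A) c) :
    G.Adj (tg G (Finset.univ \ A) c v i) (ahat G A u) := by
  obtain ⟨-, ha1⟩ := tight hAm hω2k hc hbad
  have hsle : (SingC (Finset.univ \ A) c).card ≤ G.cliqueNum := singC_le_cliqueNum hc
  have hSV : (SingV (Finset.univ \ A) c).card = (SingC (Finset.univ \ A) c).card :=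
    card_singV
  have hs2 : 1 < (SingV (Finset.univ \ A) c).card := by omega
  obtain ⟨u', hu', hu'v⟩ := Finset.exists_mem_ne hs2 v
  obtain ⟨hopt₁, hfw, hfo⟩ := swap_structure hc hv hi
  have hvU : v ∈ Finset.univ \ A := singV_mem_U hv
  have hwU : tg G (Finset.univ \ A) c v i ∈ Finset.univ \ A := (tg_basic hi).1
  have hu'w : u' ≠ tg G (Finset.univ \ A) c v i :=
    fun h => tg_ne_singV hi hu' h.symm
  have hwS : tg G (Finset.univ \ A) c v i ∈
      SingV (Finset.univ \ A) (c ∘ Equiv.swap v (tg G (Finset.univ \ A) c v i)) := by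
    apply mem_singV_of_fib hwU
    have hc₁w : (c ∘ Equiv.swap v (tg G (Finset.univ \ A) c v i))
        (tg G (Finset.univ \ A) c v i) = c v := by
      simp only [Function.comp_apply, Equiv.swap_apply_right]
    rw [hc₁w]
    exact hfw
  have hu'S : u' ∈
      SingV (Finset.univ \ A) (c ∘ Equiv.swap v (tg G (Finset.univ \ A) c v i)) := by
    apply mem_singV_of_fib (singV_mem_U hu')
    have hc₁u : (c ∘ Equiv.swap v (tg G (Finset.univ \ A) c v i)) u' = c u' := by
      simp only [Function.comp_apply]
      rw [Equiv.swap_apply_of_ne_of_ne hu'v hu'w]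
    rw [hc₁u]
    exact hfo u' hu' hu'v
  have hbad₁ : G.cliqueNum + 2 ≤ 2 * (SingC (Finset.univ \ A)
      (c ∘ Equiv.swap v (tg G (Finset.univ \ A) c v i))).card := by
    rw [singC_swap hvU hwU]
    exact hbad
  have hcom₁ := common hA hAm hω2k hchi hopt₁ hbad₁ _ hwS u' hu'S
  have hcom := common hA hAm hω2k hchi hc hbad u' hu' u hu
  have hmem : ahat G A u ∈
      G.neighborFinset (tg G (Finset.univ \ A) c v i) ∩ A := by
    rw [hcom₁, hcom, ahat_spec (ha1 u hu)]
    exact Finset.mem_singleton_self _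
  exact (SimpleGraph.mem_neighborFinset G _ _).1 (Finset.mem_inter.1 hmem).1

end BadCase4

end Aux
namespace Aux

set_option linter.unusedSectionVars false

section Final

variable {G : SimpleGraph V} [DecidableRel G.Adj] {A : Finset V} {c : V → ℕ}

lemma bad_false (hA : Indep G A) (hAm : ∀ z, z ∉ A → ∃ a ∈ A, G.Adj z a)
    (hAne : A.Nonempty)
    (hint : G.cliqueNum + G.maxDegree + 2 ≤ 2 * chi G)
    (hc : OptP G (Finset.univ \ A) c)
    (hbad : G.cliqueNum + 2 ≤ 2 * (SingC (Finset.univ \ A) c).card) : False := by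
  have hk1 : chi G ≤ chiP G (Finset.univ \ A) + 1 := chi_le_chiP_succ hA hAne
  have hω2k : G.cliqueNum + G.maxDegree ≤ 2 * chiP G (Finset.univ \ A) := by omega
  obtain ⟨h2k, ha1⟩ := tight hAm hω2k hc hbad
  have hchi : chi G = chiP G (Finset.univ \ A) + 1 := by omega
  have hsle : (SingC (Finset.univ \ A) c).card ≤ G.cliqueNum := singC_le_cliqueNum hc
  have hSV : (SingV (Finset.univ \ A) c).card = (SingC (Finset.univ \ A) c).card :=
    card_singV
  have hs1 : 0 < (SingV (Finset.univ \ A) c).card := by omega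
  obtain ⟨v₀, hv₀⟩ := Finset.card_pos.1 hs1
  obtain ⟨T, hTc, hTmem, hTinj⟩ := selection
      (G.cliqueNum - (SingC (Finset.univ \ A) c).card)
      (fun z => LClasses G (Finset.univ \ A) c z)
      (SingV (Finset.univ \ A) c)
      (fun z hz => by
        show G.cliqueNum - (SingC (Finset.univ \ A) c).card ≤
          (LClasses G (Finset.univ \ A) c z).card
        have := lambda_lb hAm hω2k hc hz
        omega)
      (by omega)
  obtain ⟨hcl, hcard⟩ := system_clique hc T hTmem hTinj
  have haaA : ahat G A v₀ ∈ A := (ahat_mem (ha1 v₀ hv₀)).2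
  have haaF : ahat G A v₀ ∉
      SingV (Finset.univ \ A) c ∪ T.image (fun p => tg G (Finset.univ \ A) c p.1 p.2) := by
    intro h
    rcases Finset.mem_union.1 h with h | h
    · exact (Finset.mem_sdiff.1 (singV_mem_U h)).2 haaA
    · obtain ⟨p, hp, hpe⟩ := Finset.mem_image.1 h
      have := (tg_basic (hTmem p hp).2).1
      rw [hpe] at this
      exact (Finset.mem_sdiff.1 this).2 haaA
  have hadjall : ∀ x ∈
      SingV (Finset.univ \ A) c ∪ T.image (fun p => tg G (Finset.univ \ A) c p.1 p.2),
      ahat G A v₀ ≠ x → G.Adj (ahat G A v₀) x := by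
    intro x hx _
    rcases Finset.mem_union.1 hx with h | h
    · exact swa hA hchi hc hv₀ (ha1 v₀ hv₀) x h
    · obtain ⟨p, hp, hpe⟩ := Finset.mem_image.1 h
      rw [← hpe]
      exact (t4 hA hAm hω2k hchi hc hbad (hTmem p hp).1 (hTmem p hp).2 hv₀).symm
  have hclique2 : G.IsClique ↑(insert (ahat G A v₀)
      (SingV (Finset.univ \ A) c ∪ T.image (fun p => tg G (Finset.univ \ A) c p.1 p.2))) := by
    rw [Finset.coe_insert]
    exact hcl.insert (fun b hb hne => hadjall b (Finset.mem_coe.1 hb) hne)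
  have hcard2 := hclique2.card_le_cliqueNum
  rw [Finset.card_insert_of_notMem haaF, hcard] at hcard2
  omega

lemma fib_nonempty {U : Finset V} {i : ℕ} (hi : i ∈ U.image c) :
    1 ≤ (fib U c i).card := by
  obtain ⟨x, hx, rfl⟩ := Finset.mem_image.1 hi
  exact Finset.card_pos.2 ⟨x, mem_fib.2 ⟨hx, rfl⟩⟩

lemma sum_fib_card {U : Finset V} :
    U.card = ∑ i ∈ U.image c, (fib U c i).card := by
  rw [Finset.card_eq_sum_card_fiberwise (f := c) (t := U.image c)
    (fun x hx => Finset.mem_image_of_mem c hx)]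
  rfl

lemma U_card_lb {U : Finset V} (hc : OptP G U c) :
    2 * chiP G U ≤ U.card + (SingC U c).card := by
  have hsum := sum_fib_card (U := U) (c := c)
  have hsplit : (SingC U c).card +
      ((U.image c).filter (fun i => ¬ (fib U c i).card = 1)).card = (U.image c).card :=
    Finset.card_filter_add_card_filter_not _
  have hunion : ∑ i ∈ U.image c, (fib U c i).card =
      ∑ i ∈ SingC U c, (fib U c i).card +
      ∑ i ∈ (U.image c).filter (fun i => ¬ (fib U c i).card = 1), (fib U c i).card :=
    (Finset.sum_filter_add_sum_filter_not _ _ _).symm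
  have h1 : (SingC U c).card ≤ ∑ i ∈ SingC U c, (fib U c i).card := by
    calc (SingC U c).card = (SingC U c).card • 1 := by rw [smul_eq_mul, mul_one]
    _ ≤ _ := Finset.card_nsmul_le_sum _ _ 1
        (fun i hi => fib_nonempty (Finset.mem_filter.1 hi).1)
  have h2 : 2 * ((U.image c).filter (fun i => ¬ (fib U c i).card = 1)).card ≤
      ∑ i ∈ (U.image c).filter (fun i => ¬ (fib U c i).card = 1), (fib U c i).card := by
    have hge : ∀ i ∈ (U.image c).filter (fun i => ¬ (fib U c i).card = 1),
        2 ≤ (fib U c i).card := by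
      intro i hi
      obtain ⟨hi1, hi2⟩ := Finset.mem_filter.1 hi
      have := fib_nonempty (c := c) hi1
      omega
    calc 2 * _ = ((U.image c).filter (fun i => ¬ (fib U c i).card = 1)).card • 2 := by
          rw [smul_eq_mul, mul_comm]
    _ ≤ _ := Finset.card_nsmul_le_sum _ _ 2 hge
  have hk := hc.2
  omega

/-- the main inequality, in ℕ -/
lemma main_nat (G : SimpleGraph V) [DecidableRel G.Adj]
    (hint : G.cliqueNum + G.maxDegree + 2 ≤ 2 * chi G) :
    2 * indepNum G + G.cliqueNum + 2 * G.maxDegree ≤ 2 * Fintype.card V + 1 := by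
  obtain ⟨A, hA, hAcard, hAm⟩ := exists_maxIndep (G := G)
  rcases isEmpty_or_nonempty V with hV | hV
  · exfalso
    have hcol : IsColoring G (∅ : Finset (Finset V)) := by
      refine ⟨fun I hI => absurd hI (Finset.notMem_empty I), fun v => isEmptyElim v,
        fun I hI => absurd hI (Finset.notMem_empty I)⟩
    have := chi_le_isColoring hcol
    simp only [Finset.card_empty] at this
    omega
  · have hAne : A.Nonempty := by
      rw [← Finset.card_pos, hAcard]
      obtain ⟨v⟩ := hV
      have : ({v} : Finset V).card ≤ indepNum G := indep_card_le
        (fun x hx y hy hadj => by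
          rw [Finset.mem_singleton] at hx hy
          exact G.irrefl (hx ▸ hy ▸ hadj))
      exact (by simpa using this : 1 ≤ indepNum G)
    obtain ⟨c, hpc, hkc⟩ := exists_optP (G := G) (Finset.univ \ A)
    have hc : OptP G (Finset.univ \ A) c := ⟨hpc, hkc⟩
    have hk1 : chi G ≤ chiP G (Finset.univ \ A) + 1 := chi_le_chiP_succ hA hAne
    have hUA : (Finset.univ \ A).card + A.card = Fintype.card V := by
      rw [Finset.card_sdiff_add_card]
      rw [Finset.union_eq_left.2 (Finset.subset_univ A), Finset.card_univ]
    have hUlb := U_card_lb hc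
    by_cases hbad : G.cliqueNum + 2 ≤ 2 * (SingC (Finset.univ \ A) c).card
    · exact absurd (bad_false hA hAm hAne hint hc hbad) (fun h => h)
    · push_neg at hbad
      omega

end Final

end Aux
theorem statement_8 (G : SimpleGraph V) [DecidableRel G.Adj]
    (h : ((G.cliqueNum : ℝ) + G.maxDegree + 1) / 2 < (chi G : ℝ)) :
    (indepNum G : ℝ) + ((G.cliqueNum : ℝ) - 1) / 2
      ≤ (Fintype.card V : ℝ) - G.maxDegree := by
  have h1 : ((G.cliqueNum + G.maxDegree + 1 : ℕ) : ℝ) < ((2 * chi G : ℕ) : ℝ) := by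
    push_cast
    linarith
  have h2 : G.cliqueNum + G.maxDegree + 1 < 2 * chi G := by exact_mod_cast h1
  have hint : G.cliqueNum + G.maxDegree + 2 ≤ 2 * chi G := by omega
  have hmain := Aux.main_nat G hint
  have h3 : ((2 * indepNum G + G.cliqueNum + 2 * G.maxDegree : ℕ) : ℝ)
      ≤ ((2 * Fintype.card V + 1 : ℕ) : ℝ) := by exact_mod_cast hmain
  push_cast at h3
  linarith
end

section
/- (Generalized Lonely Path Lemma) Let G be a finite simple graph and P a singleton-friendly frame property of colorings on G. If C is a P-optimal coloring of G, {a} and {b} are two distinct singleton color classes of C, and p_a, p_b are vertex-disjoint directed paths in the C-lonely graph L_C(G), starting at a and b respectively, each having at most one vertex in any given color class of C, then every vertex of p_a is adjacent in G to every vertex of p_b. -/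
open Finset

variable {V : Type*} [Fintype V] [DecidableEq V]

set_option linter.unusedSectionVars false
set_option maxHeartbeats 1000000

lemma class_unique {G : SimpleGraph V} {C : Finset (Finset V)} (hC : IsColoring G C)
    {I J : Finset V} {v : V} (hI : I ∈ C) (hJ : J ∈ C) (hvI : v ∈ I) (hvJ : v ∈ J) : I = J := by
  obtain ⟨K, _, hK⟩ := hC.2.1 v
  rw [hK I ⟨hI, hvI⟩, hK J ⟨hJ, hvJ⟩]

lemma image_injOn {G : SimpleGraph V} {C : Finset (Finset V)} (hC : IsColoring G C)
    (π : Equiv.Perm V) : Set.InjOn (fun I => I.image (π : V → V)) (C : Set (Finset V)) := by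
  intro I hI J hJ h
  obtain ⟨v, hv⟩ := hC.1 I hI
  replace h : I.image (π : V → V) = J.image (π : V → V) := h
  have hmem : π v ∈ J.image (π : V → V) := by
    rw [← h]; exact Finset.mem_image_of_mem _ hv
  obtain ⟨w, hw, hww⟩ := Finset.mem_image.mp hmem
  exact class_unique hC hI hJ hv (by rwa [← π.injective hww])

lemma isColoring_image {G : SimpleGraph V} {C : Finset (Finset V)} (hC : IsColoring G C)
    (π : Equiv.Perm V)
    (hprop : ∀ I ∈ C, ∀ v ∈ I, ∀ w ∈ I, ¬ G.Adj (π v) (π w)) :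
    IsColoring G (C.image fun I => I.image (π : V → V)) := by
  refine ⟨?_, ?_, ?_⟩
  · intro I' hI'
    obtain ⟨I, hI, rfl⟩ := Finset.mem_image.mp hI'
    exact (hC.1 I hI).image _
  · intro v
    obtain ⟨I, ⟨hI, hvI⟩, huniq⟩ := hC.2.1 (π.symm v)
    refine ⟨I.image (π : V → V), ⟨Finset.mem_image_of_mem _ hI, ?_⟩, ?_⟩
    · have := Finset.mem_image_of_mem (π : V → V) hvI
      simpa using this
    · rintro J' ⟨hJ', hvJ'⟩
      obtain ⟨J, hJ, rfl⟩ := Finset.mem_image.mp hJ'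
      obtain ⟨u, hu, huv⟩ := Finset.mem_image.mp hvJ'
      have : π.symm v ∈ J := by rw [← huv]; simpa using hu
      rw [huniq J ⟨hJ, this⟩]
  · intro I' hI' x hx y hy
    obtain ⟨I, hI, rfl⟩ := Finset.mem_image.mp hI'
    obtain ⟨v, hv, rfl⟩ := Finset.mem_image.mp hx
    obtain ⟨w, hw, rfl⟩ := Finset.mem_image.mp hy
    exact hprop I hI v hv w hw

lemma frame_image {G : SimpleGraph V} {C : Finset (Finset V)} (hC : IsColoring G C)
    (π : Equiv.Perm V) : Frame (C.image fun I => I.image (π : V → V)) = Frame C := by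
  unfold Frame
  rw [Finset.image_val_of_injOn (image_injOn hC π), Multiset.map_map]
  exact Multiset.map_congr rfl fun I _ => Finset.card_image_of_injective _ π.injective

lemma merge_coloring {G : SimpleGraph V} {C : Finset (Finset V)} (hC : IsColoring G C)
    {x y : V} (hxy : x ≠ y) (hadj : ¬ G.Adj x y)
    (hx : ({x} : Finset V) ∈ C) (hy : ({y} : Finset V) ∈ C) :
    IsColoring G (insert ({x, y} : Finset V) ((C.erase {x}).erase {y})) ∧
      (insert ({x, y} : Finset V) ((C.erase {x}).erase {y})).card + 1 = C.card := by
  set D := (C.erase {x}).erase {y} with hD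
  have hDsub : ∀ I ∈ D, I ∈ C := fun I hI => Finset.mem_of_mem_erase (Finset.mem_of_mem_erase hI)
  have hDx : ∀ I ∈ D, x ∉ I := by
    intro I hI hxI
    have : I = {x} := class_unique hC (hDsub I hI) hx hxI (Finset.mem_singleton_self x)
    exact (Finset.mem_erase.mp (Finset.mem_of_mem_erase hI)).1 this
  have hDy : ∀ I ∈ D, y ∉ I := by
    intro I hI hyI
    have : I = {y} := class_unique hC (hDsub I hI) hy hyI (Finset.mem_singleton_self y)
    exact (Finset.mem_erase.mp hI).1 this
  have hnotin : ({x, y} : Finset V) ∉ D := by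
    intro h
    exact hDx _ h (by simp)
  constructor
  · refine ⟨?_, ?_, ?_⟩
    · intro I hI
      rcases Finset.mem_insert.mp hI with rfl | hI
      · exact ⟨x, by simp⟩
      · exact hC.1 I (hDsub I hI)
    · intro v
      by_cases hv : v = x ∨ v = y
      · refine ⟨{x, y}, ⟨Finset.mem_insert_self _ _, by rcases hv with rfl | rfl <;> simp⟩, ?_⟩
        rintro J ⟨hJ, hvJ⟩
        rcases Finset.mem_insert.mp hJ with rfl | hJ
        · rfl
        · exfalso
          rcases hv with rfl | rfl
          · exact hDx J hJ hvJ
          · exact hDy J hJ hvJ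
      · push_neg at hv
        obtain ⟨I, ⟨hI, hvI⟩, _⟩ := hC.2.1 v
        have hIne : I ∈ D := by
          refine Finset.mem_erase.mpr ⟨?_, Finset.mem_erase.mpr ⟨?_, hI⟩⟩
          · rintro rfl; exact hv.2 (Finset.mem_singleton.mp hvI)
          · rintro rfl; exact hv.1 (Finset.mem_singleton.mp hvI)
        refine ⟨I, ⟨Finset.mem_insert_of_mem hIne, hvI⟩, ?_⟩
        rintro J ⟨hJ, hvJ⟩
        rcases Finset.mem_insert.mp hJ with rfl | hJ
        · exfalso
          rcases Finset.mem_insert.mp hvJ with rfl | hvJ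
          · exact hv.1 rfl
          · exact hv.2 (Finset.mem_singleton.mp hvJ)
        · exact class_unique hC (hDsub J hJ) (hDsub I hIne) hvJ hvI
    · intro I hI v hv w hw
      rcases Finset.mem_insert.mp hI with rfl | hI
      · have hv' : v = x ∨ v = y := by simpa using hv
        have hw' : w = x ∨ w = y := by simpa using hw
        rcases hv' with rfl | rfl <;> rcases hw' with rfl | rfl
        · exact G.loopless.irrefl _
        · exact hadj
        · exact fun h => hadj h.symm
        · exact G.loopless.irrefl _
      · exact hC.2.2 I (hDsub I hI) v hv w hw
  · have h1 : ({y} : Finset V) ∈ C.erase {x} := by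
      refine Finset.mem_erase.mpr ⟨?_, hy⟩
      simp [Finset.singleton_injective.ne_iff, Ne.symm hxy]
    have hcx : (C.erase {x}).card + 1 = C.card := Finset.card_erase_add_one hx
    have hcy : D.card + 1 = (C.erase {x}).card := Finset.card_erase_add_one h1
    rw [Finset.card_insert_of_notMem hnotin]
    omega

theorem statement_12 (G : SimpleGraph V) (P : Finset (Finset V) → Prop)
    (hFrame : IsFrameProperty G P) (hSF : IsSingletonFriendly G P)
    (C : Finset (Finset V)) (hC : IsPOptimal G P C)
    (a b : V) (hab : a ≠ b) (ha : ({a} : Finset V) ∈ C) (hb : ({b} : Finset V) ∈ C)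
    (pa pb : List V)
    (hpa : IsLonelyPath G C pa) (hpb : IsLonelyPath G C pb)
    (hheada : pa.head? = some a) (hheadb : pb.head? = some b)
    (hclassa : ∀ I ∈ C, ∀ x ∈ pa, ∀ y ∈ pa, x ∈ I → y ∈ I → x = y)
    (hclassb : ∀ I ∈ C, ∀ x ∈ pb, ∀ y ∈ pb, x ∈ I → y ∈ I → x = y)
    (hdisj : ∀ x ∈ pa, x ∉ pb) :
    ∀ x ∈ pa, ∀ y ∈ pb, G.Adj x y := by
  obtain ⟨hCcol, hCP, hCmin⟩ := hC
  obtain ⟨hnea, hnda, hcha⟩ := hpa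
  obtain ⟨hneb, hndb, hchb⟩ := hpb
  have hlena : 0 < pa.length := List.length_pos_iff.mpr hnea
  have hlenb : 0 < pb.length := List.length_pos_iff.mpr hneb
  have hpa0 : pa[0] = a := by
    cases pa with
    | nil => simp at hlena
    | cons x t => simpa using hheada
  have hpb0 : pb[0] = b := by
    cases pb with
    | nil => simp at hlenb
    | cons x t => simpa using hheadb
  have hlonea : ∀ s, (h : s + 1 < pa.length) → Lonely G C (pa[s]'(by omega)) (pa[s+1]'h) := by
    replace hcha := List.isChain_iff_getElem.mp hcha
    intro s h
    simpa [List.get_eq_getElem] using hcha s (by omega)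
  have hloneb : ∀ s, (h : s + 1 < pb.length) → Lonely G C (pb[s]'(by omega)) (pb[s+1]'h) := by
    replace hchb := List.isChain_iff_getElem.mp hchb
    intro s h
    simpa [List.get_eq_getElem] using hchb s (by omega)
  -- the key loneliness consequence: if pa[s] (1 ≤ s) lies in class I, then pa[s-1] is
  -- nonadjacent to every other member of I
  have La : ∀ I ∈ C, ∀ s, 1 ≤ s → ∀ (h : s < pa.length), pa[s] ∈ I →
      ∀ w ∈ I, w ≠ pa[s] → ¬ G.Adj (pa[s-1]'(by omega)) w := by
    intro I hI s h1 h hmem w hw hne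
    have hlon := hlonea (s-1) (by omega)
    have heq : pa[s-1+1]'(by omega) = pa[s] := by congr 1; omega
    rw [heq] at hlon
    obtain ⟨J, hJ, _, hsJ, hiff⟩ := hlon
    have hJI : J = I := class_unique hCcol hJ hI hsJ hmem
    subst hJI
    intro hadj'
    exact hne ((hiff w hw).mp hadj')
  have Lb : ∀ I ∈ C, ∀ t, 1 ≤ t → ∀ (h : t < pb.length), pb[t] ∈ I →
      ∀ w ∈ I, w ≠ pb[t] → ¬ G.Adj (pb[t-1]'(by omega)) w := by
    intro I hI t h1 h hmem w hw hne
    have hlon := hloneb (t-1) (by omega)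
    have heq : pb[t-1+1]'(by omega) = pb[t] := by congr 1; omega
    rw [heq] at hlon
    obtain ⟨J, hJ, _, hsJ, hiff⟩ := hlon
    have hJI : J = I := class_unique hCcol hJ hI hsJ hmem
    subst hJI
    intro hadj'
    exact hne ((hiff w hw).mp hadj')
  have key : ∀ n i j, ∀ (hi : i < pa.length) (hj : j < pb.length), i + j = n →
      G.Adj pa[i] pb[j] := by
    intro n
    induction n using Nat.strong_induction_on with
    | _ n IH =>
    intro i j hi hj hn
    by_contra hadj
    -- the shifting permutation
    set RA := (pa.take (i+1)).reverse with hRAdef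
    set RB := (pb.take (j+1)).reverse with hRBdef
    have hAlen : RA.length = i + 1 := by
      simp only [hRAdef, List.length_reverse, List.length_take]; omega
    have hBlen : RB.length = j + 1 := by
      simp only [hRBdef, List.length_reverse, List.length_take]; omega
    have hAnd : RA.Nodup := by
      rw [hRAdef, List.nodup_reverse]
      exact hnda.sublist (List.take_sublist _ _)
    have hBnd : RB.Nodup := by
      rw [hRBdef, List.nodup_reverse]
      exact hndb.sublist (List.take_sublist _ _)
    have hAget : ∀ k, (hk : k < i + 1) → RA[k]'(by omega) = pa[i - k]'(by omega) := by
      intro k hk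
      simp only [hRAdef]
      rw [List.getElem_reverse, List.getElem_take]
      congr 1
      simp only [List.length_take]
      omega
    have hBget : ∀ k, (hk : k < j + 1) → RB[k]'(by omega) = pb[j - k]'(by omega) := by
      intro k hk
      simp only [hRBdef]
      rw [List.getElem_reverse, List.getElem_take]
      congr 1
      simp only [List.length_take]
      omega
    have hAsub : ∀ v ∈ RA, v ∈ pa := by
      intro v hv
      rw [hRAdef, List.mem_reverse] at hv
      exact List.mem_of_mem_take hv
    have hBsub : ∀ v ∈ RB, v ∈ pb := by
      intro v hv
      rw [hRBdef, List.mem_reverse] at hv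
      exact List.mem_of_mem_take hv
    have hmemA : ∀ s, (h : s < pa.length) → s ≤ i → pa[s] ∈ RA := by
      intro s h hs
      have : pa[s] = RA[i - s]'(by omega) := by
        rw [hAget (i - s) (by omega)]
        congr 1
        omega
      rw [this]
      exact List.getElem_mem _
    have hmemB : ∀ t, (h : t < pb.length) → t ≤ j → pb[t] ∈ RB := by
      intro t h ht
      have : pb[t] = RB[j - t]'(by omega) := by
        rw [hBget (j - t) (by omega)]
        congr 1
        omega
      rw [this]
      exact List.getElem_mem _
    set π : Equiv.Perm V := RA.formPerm * RB.formPerm with hπdef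
    have hπfix : ∀ v, v ∉ RA → v ∉ RB → π v = v := by
      intro v hvA hvB
      rw [hπdef, Equiv.Perm.mul_apply, List.formPerm_apply_of_notMem hvB,
        List.formPerm_apply_of_notMem hvA]
    have hπA : ∀ s, (h : s < pa.length) → s ≤ i →
        π pa[s] = pa[(i - ((i - s) + 1) % (i + 1))]'(by omega) := by
      intro s h hs
      have hnB : pa[s] ∉ RB := fun hmem => hdisj _ (List.getElem_mem _) (hBsub _ hmem)
      rw [hπdef, Equiv.Perm.mul_apply, List.formPerm_apply_of_notMem hnB]
      have hidx : pa[s] = RA[i - s]'(by omega) := by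
        rw [hAget (i - s) (by omega)]
        congr 1
        omega
      rw [hidx, List.formPerm_apply_getElem RA hAnd (i - s) (by omega)]
      rw [hAget (((i - s) + 1) % RA.length) (by rw [hAlen]; exact Nat.mod_lt _ (by omega))]
      congr 2
      rw [hAlen]
    have hπB : ∀ t, (h : t < pb.length) → t ≤ j →
        π pb[t] = pb[(j - ((j - t) + 1) % (j + 1))]'(by omega) := by
      intro t h ht
      have hnA : pb[t] ∉ RA := fun hmem => hdisj _ (hAsub _ hmem) (List.getElem_mem _)
      have hmB : pb[t] ∈ RB := hmemB t h ht
      have hstep : RB.formPerm pb[t] = pb[(j - ((j - t) + 1) % (j + 1))]'(by omega) := by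
        have hidx : pb[t] = RB[j - t]'(by omega) := by
          rw [hBget (j - t) (by omega)]
          congr 1
          omega
        rw [hidx, List.formPerm_apply_getElem RB hBnd (j - t) (by omega)]
        rw [hBget (((j - t) + 1) % RB.length) (by rw [hBlen]; exact Nat.mod_lt _ (by omega))]
        congr 2
        rw [hBlen]
      have hres : RB.formPerm pb[t] ∉ RA := by
        rw [hstep]
        exact fun hmem => hdisj _ (hAsub _ hmem) (List.getElem_mem _)
      rw [hπdef, Equiv.Perm.mul_apply, List.formPerm_apply_of_notMem hres, hstep]
    -- specialized shift computations
    have hπA' : ∀ s, (h : s < pa.length) → 1 ≤ s → s ≤ i → π pa[s] = pa[s-1]'(by omega) := by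
      intro s h h1 hs
      rw [hπA s h hs]
      congr 1
      rw [Nat.mod_eq_of_lt (by omega)]
      omega
    have hπB' : ∀ t, (h : t < pb.length) → 1 ≤ t → t ≤ j → π pb[t] = pb[t-1]'(by omega) := by
      intro t h h1 ht
      rw [hπB t h ht]
      congr 1
      rw [Nat.mod_eq_of_lt (by omega)]
      omega
    have hπa : π a = pa[i] := by
      rw [← hpa0, hπA 0 (by omega) (by omega)]
      congr 1
      simp
    have hπb : π b = pb[j] := by
      rw [← hpb0, hπB 0 (by omega) (by omega)]
      congr 1
      simp
    -- classification of vertices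
    have hclassify : ∀ v : V, π v = v ∨ v = a ∨ v = b ∨
        (∃ s, 1 ≤ s ∧ s ≤ i ∧ ∃ (h : s < pa.length), v = pa[s]) ∨
        (∃ t, 1 ≤ t ∧ t ≤ j ∧ ∃ (h : t < pb.length), v = pb[t]) := by
      intro v
      by_cases hvA : v ∈ RA
      · obtain ⟨k, hk, hkv⟩ := List.mem_iff_getElem.mp hvA
        rw [hAlen] at hk
        rw [hAget k hk] at hkv
        rcases Nat.eq_zero_or_pos (i - k) with h0 | hpos
        · right; left
          rw [← hkv]
          simp only [h0]
          exact hpa0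
        · right; right; right; left
          exact ⟨i - k, hpos, by omega, by omega, hkv.symm⟩
      by_cases hvB : v ∈ RB
      · obtain ⟨k, hk, hkv⟩ := List.mem_iff_getElem.mp hvB
        rw [hBlen] at hk
        rw [hBget k hk] at hkv
        rcases Nat.eq_zero_or_pos (j - k) with h0 | hpos
        · right; right; left
          rw [← hkv]
          simp only [h0]
          exact hpb0
        · right; right; right; right
          exact ⟨j - k, hpos, by omega, by omega, hkv.symm⟩
      · exact Or.inl (hπfix v hvA hvB)
    -- properness of shifted classes
    have hprop : ∀ I ∈ C, ∀ v ∈ I, ∀ w ∈ I, ¬ G.Adj (π v) (π w) := by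
      intro I hI v hv w hw
      by_cases hvw : v = w
      · subst hvw; exact G.loopless.irrefl _
      rcases hclassify v with hfv | hva | hvb | ⟨s, hs1, hs2, hsl, hveq⟩ | ⟨t, ht1, ht2, htl, hveq⟩
      rotate_left 1
      · -- v = a: then I = {a} and w = a, contradiction
        exfalso
        rw [hva] at hv hvw
        have hIa : I = {a} := class_unique hCcol hI ha hv (Finset.mem_singleton_self a)
        rw [hIa, Finset.mem_singleton] at hw
        exact hvw hw.symm
      · exfalso
        rw [hvb] at hv hvw
        have hIb : I = {b} := class_unique hCcol hI hb hv (Finset.mem_singleton_self b)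
        rw [hIb, Finset.mem_singleton] at hw
        exact hvw hw.symm
      · -- v = pa[s], 1 ≤ s ≤ i
        subst hveq
        rw [hπA' s hsl hs1 hs2]
        rcases hclassify w with hfw | hwa | hwb | ⟨s', hs1', hs2', hsl', hweq⟩ |
            ⟨t, ht1, ht2, htl, hweq⟩
        · rw [hfw]
          exact La I hI s hs1 hsl hv w hw (fun h => hvw h.symm)
        · exfalso
          rw [hwa] at hw hvw
          have hIa : I = {a} := class_unique hCcol hI ha hw (Finset.mem_singleton_self a)
          rw [hIa, Finset.mem_singleton] at hv
          exact hvw hv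
        · exfalso
          rw [hwb] at hw hvw
          have hIb : I = {b} := class_unique hCcol hI hb hw (Finset.mem_singleton_self b)
          rw [hIb, Finset.mem_singleton] at hv
          exact hvw hv
        · exfalso
          subst hweq
          exact hvw (hclassa I hI _ (List.getElem_mem _) _ (List.getElem_mem _) hv hw)
        · -- mixed class: contradiction with IH
          exfalso
          subst hweq
          have hnadj : ¬ G.Adj (pa[s-1]'(by omega)) pb[t] :=
            La I hI s hs1 hsl hv pb[t] hw
              (fun h => hdisj _ (List.getElem_mem _) (h ▸ List.getElem_mem _))
          exact hnadj (IH ((s-1) + t) (by omega) (s-1) t (by omega) htl rfl)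
      · -- v = pb[t], 1 ≤ t ≤ j
        subst hveq
        rw [hπB' t htl ht1 ht2]
        rcases hclassify w with hfw | hwa | hwb | ⟨s', hs1', hs2', hsl', hweq⟩ |
            ⟨t', ht1', ht2', htl', hweq⟩
        · rw [hfw]
          exact Lb I hI t ht1 htl hv w hw (fun h => hvw h.symm)
        · exfalso
          rw [hwa] at hw hvw
          have hIa : I = {a} := class_unique hCcol hI ha hw (Finset.mem_singleton_self a)
          rw [hIa, Finset.mem_singleton] at hv
          exact hvw hv
        · exfalso
          rw [hwb] at hw hvw
          have hIb : I = {b} := class_unique hCcol hI hb hw (Finset.mem_singleton_self b)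
          rw [hIb, Finset.mem_singleton] at hv
          exact hvw hv
        · exfalso
          subst hweq
          have hnadj : ¬ G.Adj (pb[t-1]'(by omega)) pa[s'] :=
            Lb I hI t ht1 htl hv pa[s'] hw
              (fun h => hdisj _ (List.getElem_mem _) (h.symm ▸ List.getElem_mem _))
          exact hnadj (IH (s' + (t-1)) (by omega) s' (t-1) hsl' (by omega) rfl).symm
        · exfalso
          subst hweq
          exact hvw (hclassb I hI _ (List.getElem_mem _) _ (List.getElem_mem _) hv hw)
      · -- π v = v
        rw [hfv]
        rcases hclassify w with hfw | hwa | hwb | ⟨s', hs1', hs2', hsl', hweq⟩ |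
            ⟨t', ht1', ht2', htl', hweq⟩
        · rw [hfw]
          exact hCcol.2.2 I hI v hv w hw
        · exfalso
          rw [hwa] at hw hvw
          have hIa : I = {a} := class_unique hCcol hI ha hw (Finset.mem_singleton_self a)
          rw [hIa, Finset.mem_singleton] at hv
          exact hvw hv
        · exfalso
          rw [hwb] at hw hvw
          have hIb : I = {b} := class_unique hCcol hI hb hw (Finset.mem_singleton_self b)
          rw [hIb, Finset.mem_singleton] at hv
          exact hvw hv
        · subst hweq
          rw [hπA' s' hsl' hs1' hs2']
          exact fun h => La I hI s' hs1' hsl' hw v hv hvw h.symm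
        · subst hweq
          rw [hπB' t' htl' ht1' ht2']
          exact fun h => Lb I hI t' ht1' htl' hw v hv hvw h.symm
    -- the shifted coloring
    set C' := C.image (fun I => I.image (π : V → V)) with hC'def
    have hC'col : IsColoring G C' := isColoring_image hCcol π hprop
    have hC'P : P C' := hFrame C C' hCcol hC'col (frame_image hCcol π).symm hCP
    have hxC' : ({pa[i]} : Finset V) ∈ C' := by
      rw [hC'def]
      refine Finset.mem_image.mpr ⟨{a}, ha, ?_⟩
      rw [Finset.image_singleton, hπa]
    have hyC' : ({pb[j]} : Finset V) ∈ C' := by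
      rw [hC'def]
      refine Finset.mem_image.mpr ⟨{b}, hb, ?_⟩
      rw [Finset.image_singleton, hπb]
    have hne' : pa[i] ≠ pb[j] := by
      intro h
      exact hdisj pa[i] (List.getElem_mem _) (by rw [h]; exact List.getElem_mem _)
    have hP'' := hSF C' hC'col pa[i] pb[j] hne' hadj hxC' hyC' hC'P
    obtain ⟨hC''col, hcard''⟩ := merge_coloring hC'col hne' hadj hxC' hyC'
    have hle := hCmin _ hC''col hP''
    have hcardC' : C'.card = C.card := Finset.card_image_of_injOn (image_injOn hCcol π)
    omega
  intro x hx y hy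
  obtain ⟨i, hi, rfl⟩ := List.mem_iff_getElem.mp hx
  obtain ⟨j, hj, rfl⟩ := List.mem_iff_getElem.mp hy
  exact key (i + j) i j hi hj rfl
end

section
/- Let r and t be integers and G a finite simple graph with χ_r(G) − M_r(G) > (ω(G) + Δ(G) + 1)/2 + t, and let C = {I_1, …, I_m} be an optimal r-bounded coloring of G. If I_j = {v} is a singleton color class of C, then |L_C(v)| ≥ ω(G) + 2t. -/
open Finset

variable {V : Type*} [Fintype V] [DecidableEq V]

theorem statement_16 (G : SimpleGraph V) [DecidableRel G.Adj] (r : ℕ) (t : ℤ)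
    (h : ((G.cliqueNum : ℝ) + G.maxDegree + 1) / 2 + t
      < (chiR G r : ℝ) - Mr G r)
    (C : Finset (Finset V)) (hC : IsOptimalRBounded G r C)
    (v : V) (hv : ({v} : Finset V) ∈ C) :
    (G.cliqueNum : ℤ) + 2 * t ≤ (({u | Lonely G C v u} : Set V).ncard : ℤ) := by

  classical
  have hC' := hC
  obtain ⟨⟨hne, huniq, hind⟩, hbdd, hcard⟩ := hC
  -- classes are pairwise disjoint
  have hdisj : ∀ I ∈ C, ∀ J ∈ C, ∀ x : V, x ∈ I → x ∈ J → I = J := by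
    intro I hI J hJ x hxI hxJ
    obtain ⟨K, -, hK⟩ := huniq x
    rw [hK I ⟨hI, hxI⟩, hK J ⟨hJ, hxJ⟩]
  have hvnot : ∀ I ∈ C, I ≠ {v} → v ∉ I := by
    intro I hI hIne hvI
    exact hIne (hdisj I hI {v} hv v hvI (mem_singleton_self v))
  set D := C.erase {v} with hD
  set n : Finset V → ℕ := fun I => (I.filter (G.Adj v)).card with hn
  set A := D.filter (fun I => n I = 1) with hA
  set B := D.filter (fun I => 2 ≤ n I) with hB
  set Z := D.filter (fun I => n I = 0) with hZ
  -- every zero-neighbor class is full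
  have hZr : ∀ I ∈ Z, I.card = r := by
    intro I hIZ
    rw [hZ, mem_filter] at hIZ
    obtain ⟨hID, hI0⟩ := hIZ
    have hIC : I ∈ C := mem_of_mem_erase hID
    have hIne : I ≠ ({v} : Finset V) := ne_of_mem_erase hID
    have hvI : v ∉ I := hvnot I hIC hIne
    by_contra hcr
    have hlt : I.card < r := lt_of_le_of_ne (hbdd I hIC) hcr
    have hnoadj : ∀ x ∈ I, ¬ G.Adj v x := by
      intro x hx hadj
      have hx' : x ∈ I.filter (G.Adj v) := mem_filter.mpr ⟨hx, hadj⟩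
      have : I.filter (G.Adj v) = ∅ := card_eq_zero.mp hI0
      rw [this] at hx'
      exact notMem_empty x hx'
    set C2 : Finset (Finset V) := insert (insert v I) ((C.erase {v}).erase I) with hC2
    have hmemE : ∀ J ∈ (C.erase {v}).erase I, J ∈ C ∧ J ≠ ({v} : Finset V) ∧ J ≠ I := by
      intro J hJ
      exact ⟨mem_of_mem_erase (mem_of_mem_erase hJ),
        ne_of_mem_erase (mem_of_mem_erase hJ), ne_of_mem_erase hJ⟩
    have hvnotE : ∀ J ∈ (C.erase {v}).erase I, v ∉ J := by
      intro J hJ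
      exact hvnot J (hmemE J hJ).1 (hmemE J hJ).2.1
    have hnotmem : insert v I ∉ (C.erase {v}).erase I := by
      intro hmem
      exact hvnotE _ hmem (mem_insert_self v I)
    have hcol2 : IsColoring G C2 := by
      refine ⟨?_, ?_, ?_⟩
      · intro J hJ
        rcases mem_insert.mp hJ with rfl | hJ
        · exact insert_nonempty v I
        · exact hne J (hmemE J hJ).1
      · intro w
        by_cases hw : w = v ∨ w ∈ I
        · refine ⟨insert v I, ⟨mem_insert_self _ _, ?_⟩, ?_⟩
          · rcases hw with rfl | hw
            · exact mem_insert_self _ _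
            · exact mem_insert_of_mem hw
          · rintro K ⟨hK, hwK⟩
            rcases mem_insert.mp hK with rfl | hK
            · rfl
            · exfalso
              rcases hw with rfl | hw
              · exact hvnotE K hK hwK
              · exact (hmemE K hK).2.2 (hdisj K (hmemE K hK).1 I hIC w hwK hw)
        · push_neg at hw
          obtain ⟨J, ⟨hJC, hwJ⟩, -⟩ := huniq w
          have hJv : J ≠ ({v} : Finset V) := by
            intro hJeq; rw [hJeq] at hwJ; exact hw.1 (mem_singleton.mp hwJ)
          have hJI : J ≠ I := by
            intro hJeq; rw [hJeq] at hwJ; exact hw.2 hwJ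
          refine ⟨J, ⟨mem_insert_of_mem (mem_erase.mpr ⟨hJI, mem_erase.mpr ⟨hJv, hJC⟩⟩), hwJ⟩, ?_⟩
          rintro K ⟨hK, hwK⟩
          rcases mem_insert.mp hK with rfl | hK
          · exfalso
            rcases mem_insert.mp hwK with rfl | hwK
            · exact hw.1 rfl
            · exact hw.2 hwK
          · exact hdisj K (hmemE K hK).1 J hJC w hwK hwJ
      · intro J hJ x hx y hy
        rcases mem_insert.mp hJ with rfl | hJ
        · intro hadj
          rcases mem_insert.mp hx with hxv | hx' <;> rcases mem_insert.mp hy with hyv | hy'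
          · rw [hxv, hyv] at hadj; exact G.irrefl hadj
          · rw [hxv] at hadj; exact hnoadj y hy' hadj
          · rw [hyv] at hadj; exact hnoadj x hx' hadj.symm
          · exact hind I hIC x hx' y hy' hadj
        · exact hind J (hmemE J hJ).1 x hx y hy
    have hbdd2 : RBounded r C2 := by
      intro J hJ
      rcases mem_insert.mp hJ with rfl | hJ
      · rw [card_insert_of_notMem hvI]; omega
      · exact hbdd J (hmemE J hJ).1
    have hcc : 2 ≤ C.card := one_lt_card.mpr ⟨{v}, hv, I, hIC, fun e => hIne e.symm⟩
    have hcard2 : C2.card = C.card - 1 := by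
      rw [hC2, card_insert_of_notMem hnotmem,
        card_erase_of_mem (mem_erase.mpr ⟨hIne, hIC⟩), card_erase_of_mem hv]
      omega
    have hle : chiR G r ≤ C2.card :=
      Nat.sInf_le ⟨C2, hcol2, hbdd2, rfl⟩
    omega
  -- degree sum bound
  have hN : D.biUnion (fun I => I.filter (G.Adj v)) ⊆ G.neighborFinset v := by
    intro x hx
    obtain ⟨I, -, hxI⟩ := mem_biUnion.mp hx
    exact (SimpleGraph.mem_neighborFinset G v x).mpr (mem_filter.mp hxI).2
  have hsum : ∑ I ∈ D, n I ≤ G.maxDegree := by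
    have h1 : ∑ I ∈ D, n I = (D.biUnion (fun I => I.filter (G.Adj v))).card := by
      rw [card_biUnion]
      intro I hI J hJ hIJ
      refine disjoint_left.mpr ?_
      intro x hxI hxJ
      exact hIJ (hdisj I (mem_of_mem_erase hI) J (mem_of_mem_erase hJ) x
        (mem_of_mem_filter x hxI) (mem_of_mem_filter x hxJ))
    rw [h1]
    exact le_trans (card_le_card hN) (G.degree_le_maxDegree v)
  have hab : A.card + 2 * B.card ≤ ∑ I ∈ D, n I := by
    have hsub : A ∪ B ⊆ D := by
      intro I hI
      rcases mem_union.mp hI with hI | hI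
      · exact mem_of_mem_filter I hI
      · exact mem_of_mem_filter I hI
    have hABdisj : Disjoint A B := by
      refine disjoint_left.mpr ?_
      intro I hIA hIB
      rw [hA, mem_filter] at hIA
      rw [hB, mem_filter] at hIB
      omega
    calc A.card + 2 * B.card = ∑ I ∈ A, n I + ∑ I ∈ B, 2 := by
          rw [sum_const, smul_eq_mul]
          congr 1
          · rw [Finset.sum_congr rfl (fun I hI => (mem_filter.mp hI).2), sum_const,
              smul_eq_mul, mul_one]
          · ring
      _ ≤ ∑ I ∈ A, n I + ∑ I ∈ B, n I :=
          Nat.add_le_add_left (Finset.sum_le_sum (fun I hI => (mem_filter.mp hI).2)) _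
      _ = ∑ I ∈ A ∪ B, n I := (Finset.sum_union hABdisj).symm
      _ ≤ ∑ I ∈ D, n I := Finset.sum_le_sum_of_subset hsub
  -- partition of D
  have hDcard : D.card = A.card + B.card + Z.card := by
    have hUn : A ∪ B ∪ Z = D := by
      ext I
      simp only [hA, hB, hZ, mem_union, mem_filter]
      constructor
      · rintro ((⟨hI, -⟩ | ⟨hI, -⟩) | ⟨hI, -⟩) <;> exact hI
      · intro hI
        by_cases h1 : n I = 1
        · exact Or.inl (Or.inl ⟨hI, h1⟩)
        · by_cases h0 : n I = 0
          · exact Or.inr ⟨hI, h0⟩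
          · exact Or.inl (Or.inr ⟨hI, by omega⟩)
    have d1 : Disjoint A B := by
      refine disjoint_left.mpr ?_
      intro I hIA hIB
      rw [hA, mem_filter] at hIA; rw [hB, mem_filter] at hIB; omega
    have d2 : Disjoint (A ∪ B) Z := by
      refine disjoint_left.mpr ?_
      intro I hI hIZ
      rw [hZ, mem_filter] at hIZ
      rcases mem_union.mp hI with hI | hI
      · rw [hA, mem_filter] at hI; omega
      · rw [hB, mem_filter] at hI; omega
    rw [← hUn, card_union_of_disjoint d2, card_union_of_disjoint d1]
  -- Z.card ≤ Mr
  have hZM : Z.card ≤ Mr G r := by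
    have hZsub : Z ⊆ C.filter (fun I => I.card = r) := by
      intro I hI
      exact mem_filter.mpr ⟨mem_of_mem_erase (mem_of_mem_filter I hI), hZr I hI⟩
    have hbddS : BddAbove {k | ∃ C3 : Finset (Finset V), IsOptimalRBounded G r C3 ∧
        (C3.filter fun I => I.card = r).card = k} := by
      refine ⟨Fintype.card (Finset V), ?_⟩
      rintro k ⟨C3, -, rfl⟩
      exact le_trans (card_le_card (filter_subset _ _)) (card_le_univ C3)
    have hmem : (C.filter fun I => I.card = r).card ∈ {k | ∃ C3 : Finset (Finset V),
        IsOptimalRBounded G r C3 ∧ (C3.filter fun I => I.card = r).card = k} := ⟨C, hC', rfl⟩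
    exact le_trans (card_le_card hZsub) (le_csSup hbddS hmem)
  -- lonely vertices
  set L : Finset V := Finset.univ.filter (fun u => Lonely G C v u) with hL
  have hLcard : ({u | Lonely G C v u} : Set V).ncard = L.card := by
    rw [Set.ncard_eq_toFinset_card']
    congr 1
    ext u
    simp [hL]
  set f : Finset V → V := fun I =>
    if h : (I.filter (G.Adj v)).Nonempty then h.choose else v with hf
  have hfmem : ∀ I : Finset V, (I.filter (G.Adj v)).Nonempty → f I ∈ I.filter (G.Adj v) := by
    intro I hI
    rw [hf]
    simp only [dif_pos hI]
    exact hI.choose_spec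
  have hfA : ∀ I ∈ A, I.filter (G.Adj v) = {f I} := by
    intro I hI
    rw [hA, mem_filter] at hI
    obtain ⟨w, hw⟩ := card_eq_one.mp hI.2
    have hne' : (I.filter (G.Adj v)).Nonempty := ⟨w, by rw [hw]; exact mem_singleton_self w⟩
    have hm := hfmem I hne'
    rw [hw] at hm
    rw [hw, mem_singleton.mp hm]
  have haL : A.card ≤ L.card := by
    refine card_le_card_of_injOn f ?_ ?_
    · intro I hI
      have hfilt := hfA I hI
      have hID : I ∈ D := mem_of_mem_filter I hI
      have hIC : I ∈ C := mem_of_mem_erase hID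
      have hfmem : f I ∈ I.filter (G.Adj v) := by rw [hfilt]; exact mem_singleton_self _
      simp only [hL, Finset.mem_coe, mem_filter]
      refine ⟨mem_univ _, I, hIC, hvnot I hIC (ne_of_mem_erase hID),
        mem_of_mem_filter _ hfmem, ?_⟩
      intro x hx
      constructor
      · intro hadj
        have : x ∈ I.filter (G.Adj v) := mem_filter.mpr ⟨hx, hadj⟩
        rw [hfilt, mem_singleton] at this
        exact this
      · rintro rfl
        exact (mem_filter.mp hfmem).2
    · intro I hI J hJ hIJ
      have hfI : f I ∈ I.filter (G.Adj v) := by rw [hfA I hI]; exact mem_singleton_self _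
      have hfJ : f J ∈ J.filter (G.Adj v) := by rw [hfA J hJ]; exact mem_singleton_self _
      exact hdisj I (mem_of_mem_erase (mem_of_mem_filter I hI))
        J (mem_of_mem_erase (mem_of_mem_filter J hJ)) (f I)
        (mem_of_mem_filter _ hfI) (hIJ ▸ mem_of_mem_filter _ hfJ)
  -- arithmetic
  have hDC : C.card = D.card + 1 := by
    rw [hD, card_erase_of_mem hv]
    have : 1 ≤ C.card := card_pos.mpr ⟨{v}, hv⟩
    omega
  have h2 : ((G.cliqueNum : ℝ) + G.maxDegree + 1) + 2 * t
      < 2 * (chiR G r : ℝ) - 2 * (Mr G r) := by linarith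
  have h3 : (G.cliqueNum : ℤ) + G.maxDegree + 1 + 2 * t
      < 2 * (chiR G r : ℤ) - 2 * (Mr G r : ℤ) := by exact_mod_cast h2
  have hkey : 2 * D.card ≤ A.card + G.maxDegree + 2 * Mr G r := by
    have := le_trans hab hsum
    omega
  rw [hLcard]
  omega
end

section
/- Let r ≥ 2. If G is a finite simple graph with ι_r(G) > ω(G)/2, then χ_r(G) − M_r(G) ≤ (ω(G) + Δ(G) + 1)/2. -/
open Finset

variable {V : Type*} [Fintype V] [DecidableEq V]

section Aux

variable {G : SimpleGraph V} [DecidableRel G.Adj] {r : ℕ} {C : Finset (Finset V)}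

lemma cls_unique (hC : IsColoring G C) {v : V} {I J : Finset V}
    (hI : I ∈ C) (hvI : v ∈ I) (hJ : J ∈ C) (hvJ : v ∈ J) : I = J := by
  obtain ⟨K, _, huniq⟩ := hC.2.1 v
  rw [huniq I ⟨hI, hvI⟩, huniq J ⟨hJ, hvJ⟩]

lemma not_mem_other (hC : IsColoring G C) {v : V} {I J : Finset V}
    (hI : I ∈ C) (hvI : v ∈ I) (hJ : J ∈ C) (hIJ : I ≠ J) : v ∉ J :=
  fun hvJ => hIJ (cls_unique hC hI hvI hJ hvJ)

/-- Replace a subfamily `D` of a coloring by another family `E` partitioning the same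
vertices; the result is a coloring. -/
lemma surgery_coloring (hC : IsColoring G C) {D E : Finset (Finset V)} (hD : D ⊆ C)
    (hne : ∀ I ∈ E, I.Nonempty)
    (hind : ∀ I ∈ E, ∀ v ∈ I, ∀ w ∈ I, ¬ G.Adj v w)
    (hdisj : ∀ I ∈ E, ∀ J ∈ E, I ≠ J → ∀ v ∈ I, v ∉ J)
    (hcover : ∀ v : V, (∃ I ∈ D, v ∈ I) ↔ (∃ I ∈ E, v ∈ I)) :
    IsColoring G ((C \ D) ∪ E) := by
  refine ⟨?_, ?_, ?_⟩
  · intro I hI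
    rcases Finset.mem_union.1 hI with hI | hI
    · exact hC.1 I (Finset.mem_sdiff.1 hI).1
    · exact hne I hI
  · intro v
    obtain ⟨I₀, ⟨hI₀, hvI₀⟩, _⟩ := hC.2.1 v
    -- find a class of the new coloring containing v
    have hex : ∃ I, I ∈ (C \ D) ∪ E ∧ v ∈ I := by
      by_cases hmem : I₀ ∈ D
      · obtain ⟨I, hI, hvI⟩ := (hcover v).1 ⟨I₀, hmem, hvI₀⟩
        exact ⟨I, Finset.mem_union.2 (Or.inr hI), hvI⟩
      · exact ⟨I₀, Finset.mem_union.2 (Or.inl (Finset.mem_sdiff.2 ⟨hI₀, hmem⟩)), hvI₀⟩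
    obtain ⟨I, hI, hvI⟩ := hex
    refine ⟨I, ⟨hI, hvI⟩, ?_⟩
    intro J ⟨hJ, hvJ⟩
    -- uniqueness
    have key : ∀ A B : Finset V, A ∈ (C \ D) ∪ E → B ∈ (C \ D) ∪ E → v ∈ A → v ∈ B → A = B := by
      intro A B hA hB hvA hvB
      rcases Finset.mem_union.1 hA with hA' | hA' <;> rcases Finset.mem_union.1 hB with hB' | hB'
      · exact cls_unique hC (Finset.mem_sdiff.1 hA').1 hvA (Finset.mem_sdiff.1 hB').1 hvB
      · -- A ∈ C \ D, B ∈ E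
        exfalso
        obtain ⟨J', hJ', hvJ'⟩ := (hcover v).2 ⟨B, hB', hvB⟩
        have : A = J' := cls_unique hC (Finset.mem_sdiff.1 hA').1 hvA (hD hJ') hvJ'
        exact (Finset.mem_sdiff.1 hA').2 (this ▸ hJ')
      · exfalso
        obtain ⟨J', hJ', hvJ'⟩ := (hcover v).2 ⟨A, hA', hvA⟩
        have : B = J' := cls_unique hC (Finset.mem_sdiff.1 hB').1 hvB (hD hJ') hvJ'
        exact (Finset.mem_sdiff.1 hB').2 (this ▸ hJ')
      · by_contra hne'
        exact hdisj A hA' B hB' hne' v hvA hvB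
    exact key J I hJ hI hvJ hvI
  · intro I hI
    rcases Finset.mem_union.1 hI with hI' | hI'
    · exact hC.2.2 I (Finset.mem_sdiff.1 hI').1
    · exact hind I hI'

lemma surgery_card {D E : Finset (Finset V)} (hD : D ⊆ C) :
    ((C \ D) ∪ E).card ≤ C.card - D.card + E.card := by
  calc ((C \ D) ∪ E).card ≤ (C \ D).card + E.card := Finset.card_union_le _ _
    _ = C.card - D.card + E.card := by rw [Finset.card_sdiff_of_subset hD]

end Aux
section Aux2
set_option linter.unusedSectionVars false

variable {G : SimpleGraph V} [DecidableRel G.Adj] {r : ℕ} {C : Finset (Finset V)}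

lemma chiR_le (hC : IsColoring G C) (hB : RBounded r C) : chiR G r ≤ C.card :=
  Nat.sInf_le ⟨C, hC, hB, rfl⟩

/-- Surgery with fewer new classes contradicts optimality. -/
lemma surgery_lt_false (hopt : IsOptimalRBounded G r C) {D E : Finset (Finset V)} (hD : D ⊆ C)
    (hne : ∀ I ∈ E, I.Nonempty)
    (hind : ∀ I ∈ E, ∀ v ∈ I, ∀ w ∈ I, ¬ G.Adj v w)
    (hdisj : ∀ I ∈ E, ∀ J ∈ E, I ≠ J → ∀ v ∈ I, v ∉ J)
    (hcover : ∀ v : V, (∃ I ∈ D, v ∈ I) ↔ (∃ I ∈ E, v ∈ I))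
    (hrb : ∀ I ∈ E, I.card ≤ r)
    (hlt : E.card < D.card) : False := by
  have hcol := surgery_coloring hopt.1 hD hne hind hdisj hcover
  have hrb' : RBounded r ((C \ D) ∪ E) := by
    intro I hI
    rcases Finset.mem_union.1 hI with hI' | hI'
    · exact hopt.2.1 I (Finset.mem_sdiff.1 hI').1
    · exact hrb I hI'
  have h1 : chiR G r ≤ ((C \ D) ∪ E).card := chiR_le hcol hrb'
  have h2 : ((C \ D) ∪ E).card ≤ C.card - D.card + E.card := surgery_card hD
  have h3 : D.card ≤ C.card := Finset.card_le_card hD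
  have h4 : C.card = chiR G r := hopt.2.2
  omega

/-- Surgery preserving the number of classes yields another optimal coloring. -/
lemma surgery_optimal (hopt : IsOptimalRBounded G r C) {D E : Finset (Finset V)} (hD : D ⊆ C)
    (hne : ∀ I ∈ E, I.Nonempty)
    (hind : ∀ I ∈ E, ∀ v ∈ I, ∀ w ∈ I, ¬ G.Adj v w)
    (hdisj : ∀ I ∈ E, ∀ J ∈ E, I ≠ J → ∀ v ∈ I, v ∉ J)
    (hcover : ∀ v : V, (∃ I ∈ D, v ∈ I) ↔ (∃ I ∈ E, v ∈ I))
    (hrb : ∀ I ∈ E, I.card ≤ r)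
    (hle : E.card ≤ D.card) : IsOptimalRBounded G r ((C \ D) ∪ E) := by
  have hcol := surgery_coloring hopt.1 hD hne hind hdisj hcover
  have hrb' : RBounded r ((C \ D) ∪ E) := by
    intro I hI
    rcases Finset.mem_union.1 hI with hI' | hI'
    · exact hopt.2.1 I (Finset.mem_sdiff.1 hI').1
    · exact hrb I hI'
  have h1 : chiR G r ≤ ((C \ D) ∪ E).card := chiR_le hcol hrb'
  have h2 : ((C \ D) ∪ E).card ≤ C.card - D.card + E.card := surgery_card hD
  have h3 : D.card ≤ C.card := Finset.card_le_card hD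
  have h4 : C.card = chiR G r := hopt.2.2
  exact ⟨hcol, hrb', by omega⟩

/-- Singleton classes of an optimal coloring are pairwise adjacent. -/
lemma sing_adj (hr : 2 ≤ r) (hopt : IsOptimalRBounded G r C) {a b : V}
    (ha : {a} ∈ C) (hb : {b} ∈ C) (hab : a ≠ b) : G.Adj a b := by
  by_contra hadj
  have hDss : {({a} : Finset V), {b}} ⊆ C := by
    intro I hI; rcases Finset.mem_insert.1 hI with h | h
    · exact h ▸ ha
    · exact (Finset.mem_singleton.1 h) ▸ hb
  refine surgery_lt_false hopt (D := {({a} : Finset V), {b}}) (E := {({a, b} : Finset V)})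
    hDss ?_ ?_ ?_ ?_ ?_ ?_
  · intro I hI; rw [Finset.mem_singleton.1 hI]; exact ⟨a, by simp⟩
  · intro I hI v hv w hw
    rw [Finset.mem_singleton.1 hI] at hv hw
    rcases Finset.mem_insert.1 hv with rfl | hv' <;> rcases Finset.mem_insert.1 hw with rfl | hw'
    · exact fun h => G.loopless.irrefl _ h
    · rw [Finset.mem_singleton.1 hw']; exact hadj
    · rw [Finset.mem_singleton.1 hv']; exact fun h => hadj h.symm
    · rw [Finset.mem_singleton.1 hv', Finset.mem_singleton.1 hw']
      exact fun h => G.loopless.irrefl _ h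
  · intro I hI J hJ hIJ
    rw [Finset.mem_singleton.1 hI, Finset.mem_singleton.1 hJ] at hIJ
    exact absurd rfl hIJ
  · intro v
    constructor
    · rintro ⟨I, hI, hvI⟩
      refine ⟨{a, b}, Finset.mem_singleton_self _, ?_⟩
      rcases Finset.mem_insert.1 hI with rfl | hI'
      · simp only [Finset.mem_singleton] at hvI; simp [hvI]
      · rw [Finset.mem_singleton.1 hI'] at hvI
        simp only [Finset.mem_singleton] at hvI; simp [hvI]
    · rintro ⟨I, hI, hvI⟩
      rw [Finset.mem_singleton.1 hI] at hvI
      rcases Finset.mem_insert.1 hvI with rfl | hv'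
      · exact ⟨{v}, by simp, Finset.mem_singleton_self v⟩
      · rw [Finset.mem_singleton.1 hv']
        exact ⟨{b}, by simp, Finset.mem_singleton_self b⟩
  · intro I hI
    rw [Finset.mem_singleton.1 hI]
    calc ({a, b} : Finset V).card ≤ 2 := Finset.card_insert_le _ _ |>.trans (by simp)
      _ ≤ r := hr
  · have : ({a} : Finset V) ≠ {b} := by
      intro h; exact hab (Finset.singleton_injective h)
    rw [Finset.card_singleton]
    rw [Finset.card_insert_of_notMem (by simpa using this), Finset.card_singleton]
    omega

end Aux2
section Aux3
set_option linter.unusedSectionVars false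
set_option maxHeartbeats 1000000

variable {G : SimpleGraph V} [DecidableRel G.Adj] {r : ℕ} {C : Finset (Finset V)}

/-- A singleton class has a neighbor in every other non-full class. -/
lemma exists_nbr (hopt : IsOptimalRBounded G r C) {x : V} {J : Finset V}
    (hx : {x} ∈ C) (hJ : J ∈ C) (hJx : J ≠ {x}) (hJr : J.card < r) :
    ∃ y ∈ J, G.Adj x y := by
  by_contra hno
  push_neg at hno
  have hxJ : x ∉ J := not_mem_other hopt.1 hx (Finset.mem_singleton_self x) hJ
    (fun h => hJx h.symm)
  have hDss : {({x} : Finset V), J} ⊆ C := by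
    intro I hI; rcases Finset.mem_insert.1 hI with rfl | h
    · exact hx
    · exact (Finset.mem_singleton.1 h) ▸ hJ
  refine surgery_lt_false hopt (D := {({x} : Finset V), J}) (E := {insert x J})
    hDss ?_ ?_ ?_ ?_ ?_ ?_
  · intro I hI; rw [Finset.mem_singleton.1 hI]; exact ⟨x, Finset.mem_insert_self _ _⟩
  · intro I hI v hv w hw
    rw [Finset.mem_singleton.1 hI] at hv hw
    rcases Finset.mem_insert.1 hv with rfl | hv' <;> rcases Finset.mem_insert.1 hw with rfl | hw'
    · exact fun h => G.loopless.irrefl _ h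
    · exact hno _ hw'
    · exact fun h => hno _ hv' h.symm
    · exact hopt.1.2.2 J hJ _ hv' _ hw'
  · intro I hI I' hI' hII'
    rw [Finset.mem_singleton.1 hI, Finset.mem_singleton.1 hI'] at hII'
    exact absurd rfl hII'
  · intro v
    constructor
    · rintro ⟨I, hI, hvI⟩
      refine ⟨insert x J, Finset.mem_singleton_self _, ?_⟩
      rcases Finset.mem_insert.1 hI with rfl | hI'
      · simp only [Finset.mem_singleton] at hvI; simp [hvI]
      · rw [Finset.mem_singleton.1 hI'] at hvI; exact Finset.mem_insert_of_mem hvI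
    · rintro ⟨I, hI, hvI⟩
      rw [Finset.mem_singleton.1 hI] at hvI
      rcases Finset.mem_insert.1 hvI with rfl | hv'
      · exact ⟨{v}, by simp, Finset.mem_singleton_self v⟩
      · exact ⟨J, by simp, hv'⟩
  · intro I hI
    rw [Finset.mem_singleton.1 hI, Finset.card_insert_of_notMem hxJ]
    omega
  · have h1 : ({x} : Finset V) ≠ J := fun h => hJx h.symm
    rw [Finset.card_singleton, Finset.card_insert_of_notMem (by simpa using h1),
      Finset.card_singleton]
    omega

/-- A lonely witness is adjacent to every other singleton class. -/
lemma wit_adj (hr : 2 ≤ r) (hopt : IsOptimalRBounded G r C) {x y w : V} {J : Finset V}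
    (hx : {x} ∈ C) (hJ : J ∈ C) (hJ2 : 2 ≤ J.card) (hwJ : w ∈ J)
    (hw : ∀ z ∈ J, G.Adj x z ↔ z = w) (hy : {y} ∈ C) (hyx : y ≠ x) : G.Adj w y := by
  have hxw : G.Adj x w := (hw w hwJ).2 rfl
  have hwx : w ≠ x := fun h => G.loopless.irrefl x (h ▸ hxw)
  have hJx : J ≠ ({x} : Finset V) := by
    intro h; rw [h] at hwJ; exact hwx (Finset.mem_singleton.1 hwJ)
  have hxJ : x ∉ J := not_mem_other hopt.1 hx (Finset.mem_singleton_self x) hJ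
    (fun h => hJx h.symm)
  have hDss : {({x} : Finset V), J} ⊆ C := by
    intro I hI; rcases Finset.mem_insert.1 hI with rfl | h
    · exact hx
    · exact (Finset.mem_singleton.1 h) ▸ hJ
  have hopt' := surgery_optimal hopt (D := {({x} : Finset V), J})
      (E := {({w} : Finset V), insert x (J.erase w)}) hDss ?_ ?_ ?_ ?_ ?_ ?_
  · -- use the new optimal coloring
    set C' := (C \ {({x} : Finset V), J}) ∪ {({w} : Finset V), insert x (J.erase w)} with hC'
    have hwC' : ({w} : Finset V) ∈ C' := Finset.mem_union.2 (Or.inr (by simp))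
    have hyC' : ({y} : Finset V) ∈ C' := by
      refine Finset.mem_union.2 (Or.inl (Finset.mem_sdiff.2 ⟨hy, ?_⟩))
      simp only [Finset.mem_insert, Finset.mem_singleton]
      push_neg
      constructor
      · intro h; exact hyx (Finset.singleton_injective h)
      · intro h
        rw [← h] at hJ2
        simp at hJ2
    have hwy : w ≠ y := by
      intro h
      have hyJ : ({y} : Finset V) ≠ J := by
        intro h2; rw [← h2] at hJ2; simp at hJ2
      exact not_mem_other hopt.1 hy (Finset.mem_singleton_self y) hJ hyJ (h ▸ hwJ)
    exact sing_adj hr hopt' hwC' hyC' hwy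
  · intro I hI
    rcases Finset.mem_insert.1 hI with rfl | h
    · exact ⟨w, Finset.mem_singleton_self w⟩
    · rw [Finset.mem_singleton.1 h]; exact ⟨x, Finset.mem_insert_self _ _⟩
  · intro I hI v hv z hz
    rcases Finset.mem_insert.1 hI with rfl | h
    · rw [Finset.mem_singleton.1 hv, Finset.mem_singleton.1 hz]
      exact fun h => G.loopless.irrefl _ h
    · rw [Finset.mem_singleton.1 h] at hv hz
      rcases Finset.mem_insert.1 hv with rfl | hv' <;> rcases Finset.mem_insert.1 hz with rfl | hz'
      · exact fun h => G.loopless.irrefl _ h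
      · intro hadj
        have := (hw z (Finset.mem_of_mem_erase hz')).1 hadj
        exact (Finset.mem_erase.1 hz').1 this
      · intro hadj
        have := (hw v (Finset.mem_of_mem_erase hv')).1 hadj.symm
        exact (Finset.mem_erase.1 hv').1 this
      · exact hopt.1.2.2 J hJ _ (Finset.mem_of_mem_erase hv') _ (Finset.mem_of_mem_erase hz')
  · intro I hI I' hI' hII' v hv hv'
    rcases Finset.mem_insert.1 hI with rfl | h <;> rcases Finset.mem_insert.1 hI' with rfl | h'
    · exact hII' rfl
    · rw [Finset.mem_singleton.1 h'] at hv'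
      have hvw : v = w := Finset.mem_singleton.1 hv
      subst hvw
      rcases Finset.mem_insert.1 hv' with h2 | h2
      · exact hwx h2
      · exact (Finset.mem_erase.1 h2).1 rfl
    · rw [Finset.mem_singleton.1 h] at hv
      have hvw : v = w := Finset.mem_singleton.1 hv'
      subst hvw
      rcases Finset.mem_insert.1 hv with h2 | h2
      · exact hwx h2
      · exact (Finset.mem_erase.1 h2).1 rfl
    · rw [Finset.mem_singleton.1 h, Finset.mem_singleton.1 h'] at hII'
      exact hII' rfl
  · intro v
    constructor
    · rintro ⟨I, hI, hvI⟩
      rcases Finset.mem_insert.1 hI with rfl | hI'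
      · have hvx : v = x := Finset.mem_singleton.1 hvI
        subst hvx
        exact ⟨insert v (J.erase w), by simp, Finset.mem_insert_self _ _⟩
      · rw [Finset.mem_singleton.1 hI'] at hvI
        by_cases hvw : v = w
        · exact ⟨{w}, by simp, by simp [hvw]⟩
        · exact ⟨insert x (J.erase w), by simp,
            Finset.mem_insert_of_mem (Finset.mem_erase.2 ⟨hvw, hvI⟩)⟩
    · rintro ⟨I, hI, hvI⟩
      rcases Finset.mem_insert.1 hI with rfl | hI'
      · have hvw : v = w := Finset.mem_singleton.1 hvI
        subst hvw
        exact ⟨J, by simp, hwJ⟩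
      · rw [Finset.mem_singleton.1 hI'] at hvI
        rcases Finset.mem_insert.1 hvI with rfl | hv'
        · exact ⟨{v}, by simp, Finset.mem_singleton_self v⟩
        · exact ⟨J, by simp, Finset.mem_of_mem_erase hv'⟩
  · intro I hI
    rcases Finset.mem_insert.1 hI with rfl | h
    · simpa using (by omega : 1 ≤ r)
    · rw [Finset.mem_singleton.1 h]
      have : x ∉ J.erase w := fun hc => hxJ (Finset.mem_of_mem_erase hc)
      rw [Finset.card_insert_of_notMem this, Finset.card_erase_of_mem hwJ]
      have := hopt.2.1 J hJ
      omega
  · -- E.card ≤ D.card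
    have h1 : ({x} : Finset V) ≠ J := fun h => hJx h.symm
    have h2 : ({w} : Finset V) ≠ insert x (J.erase w) := by
      intro h
      have : x ∈ ({w} : Finset V) := h ▸ Finset.mem_insert_self _ _
      exact hwx (Finset.mem_singleton.1 this).symm
    rw [Finset.card_insert_of_notMem (by simpa using h2),
      Finset.card_insert_of_notMem (by simpa using h1)]
    simp

end Aux3
section Aux4
set_option linter.unusedSectionVars false
set_option maxHeartbeats 1000000

variable {G : SimpleGraph V} [DecidableRel G.Adj] {r : ℕ} {C : Finset (Finset V)}

/-- Two singletons seeing the same class uniquely have the same witness. -/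
lemma same_wit (hr : 2 ≤ r) (hopt : IsOptimalRBounded G r C) {x y w w' : V} {J : Finset V}
    (hx : {x} ∈ C) (hy : {y} ∈ C) (hxy : x ≠ y) (hJ : J ∈ C) (hJ2 : 2 ≤ J.card)
    (hwJ : w ∈ J) (hw : ∀ z ∈ J, G.Adj x z ↔ z = w)
    (hw'J : w' ∈ J) (hw' : ∀ z ∈ J, G.Adj y z ↔ z = w') : w = w' := by
  by_contra hne
  have hadj : G.Adj w' x := wit_adj hr hopt hy hJ hJ2 hw'J hw' hx hxy
  exact hne ((hw w' hw'J).1 hadj.symm).symm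

/-- Crossing rule: witnesses for distinct pivots in distinct classes are adjacent. -/
lemma cross_adj (hr : 2 ≤ r) (hopt : IsOptimalRBounded G r C) {x x' w w' : V}
    {J J' : Finset V}
    (hx : {x} ∈ C) (hx' : {x'} ∈ C) (hxx : x ≠ x') (hJ : J ∈ C) (hJ' : J' ∈ C) (hJJ : J ≠ J')
    (hJ2 : 2 ≤ J.card) (hJ2' : 2 ≤ J'.card)
    (hwJ : w ∈ J) (hw : ∀ z ∈ J, G.Adj x z ↔ z = w)
    (hw'J : w' ∈ J') (hw' : ∀ z ∈ J', G.Adj x' z ↔ z = w') : G.Adj w w' := by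
  by_contra hnadj
  -- basic separations
  have hxw : G.Adj x w := (hw w hwJ).2 rfl
  have hx'w' : G.Adj x' w' := (hw' w' hw'J).2 rfl
  have hJx : J ≠ ({x} : Finset V) := by intro h; rw [h] at hJ2; simp at hJ2
  have hJ'x' : J' ≠ ({x'} : Finset V) := by intro h; rw [h] at hJ2'; simp at hJ2'
  have hJx' : J ≠ ({x'} : Finset V) := by intro h; rw [h] at hJ2; simp at hJ2
  have hJ'x : J' ≠ ({x} : Finset V) := by intro h; rw [h] at hJ2'; simp at hJ2'
  have hxJ : x ∉ J := not_mem_other hopt.1 hx (Finset.mem_singleton_self x) hJ (Ne.symm hJx)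
  have hx'J' : x' ∉ J' :=
    not_mem_other hopt.1 hx' (Finset.mem_singleton_self x') hJ' (Ne.symm hJ'x')
  have hxJ' : x ∉ J' := not_mem_other hopt.1 hx (Finset.mem_singleton_self x) hJ' (Ne.symm hJ'x)
  have hx'J : x' ∉ J :=
    not_mem_other hopt.1 hx' (Finset.mem_singleton_self x') hJ (Ne.symm hJx')
  have hdJJ : ∀ v ∈ J, v ∉ J' := fun v hv => not_mem_other hopt.1 hJ hv hJ' hJJ
  have hww : w ≠ w' := fun h => hdJJ w hwJ (h ▸ hw'J)
  have hwx : w ≠ x := fun h => G.loopless.irrefl x (h ▸ hxw)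
  have hw'x' : w' ≠ x' := fun h => G.loopless.irrefl x' (h ▸ hx'w')
  have hwx' : w ≠ x' := fun h => hx'J (h ▸ hwJ)
  have hw'x : w' ≠ x := fun h => hxJ' (h ▸ hw'J)
  -- D and E
  set A₁ : Finset V := insert x (J.erase w) with hA₁
  set A₂ : Finset V := insert x' (J'.erase w') with hA₂
  have hxA₂ : x ∉ A₂ := by
    simp only [hA₂, Finset.mem_insert, Finset.mem_erase]
    push_neg
    exact ⟨hxx, fun _ => hxJ'⟩
  have hx'A₁ : x' ∉ A₁ := by
    simp only [hA₁, Finset.mem_insert, Finset.mem_erase]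
    push_neg
    exact ⟨hxx.symm, fun _ => hx'J⟩
  have hDss : {({x} : Finset V), {x'}, J, J'} ⊆ C := by
    intro I hI
    simp only [Finset.mem_insert, Finset.mem_singleton] at hI
    rcases hI with rfl | rfl | rfl | rfl
    · exact hx
    · exact hx'
    · exact hJ
    · exact hJ'
  refine surgery_lt_false hopt (D := {({x} : Finset V), {x'}, J, J'})
    (E := {A₁, A₂, ({w, w'} : Finset V)}) hDss ?_ ?_ ?_ ?_ ?_ ?_
  · -- nonempty
    intro I hI
    simp only [Finset.mem_insert, Finset.mem_singleton] at hI
    rcases hI with rfl | rfl | rfl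
    · exact ⟨x, Finset.mem_insert_self _ _⟩
    · exact ⟨x', Finset.mem_insert_self _ _⟩
    · exact ⟨w, Finset.mem_insert_self _ _⟩
  · -- independence
    intro I hI v hv z hz
    simp only [Finset.mem_insert, Finset.mem_singleton] at hI
    rcases hI with rfl | rfl | rfl
    · rcases Finset.mem_insert.1 hv with rfl | hv' <;> rcases Finset.mem_insert.1 hz with rfl | hz'
      · exact fun h => G.loopless.irrefl _ h
      · intro hadj; exact (Finset.mem_erase.1 hz').1 ((hw z (Finset.mem_of_mem_erase hz')).1 hadj)
      · intro hadj
        exact (Finset.mem_erase.1 hv').1 ((hw v (Finset.mem_of_mem_erase hv')).1 hadj.symm)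
      · exact hopt.1.2.2 J hJ _ (Finset.mem_of_mem_erase hv') _ (Finset.mem_of_mem_erase hz')
    · rcases Finset.mem_insert.1 hv with rfl | hv' <;> rcases Finset.mem_insert.1 hz with rfl | hz'
      · exact fun h => G.loopless.irrefl _ h
      · intro hadj
        exact (Finset.mem_erase.1 hz').1 ((hw' z (Finset.mem_of_mem_erase hz')).1 hadj)
      · intro hadj
        exact (Finset.mem_erase.1 hv').1 ((hw' v (Finset.mem_of_mem_erase hv')).1 hadj.symm)
      · exact hopt.1.2.2 J' hJ' _ (Finset.mem_of_mem_erase hv') _ (Finset.mem_of_mem_erase hz')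
    · rcases Finset.mem_insert.1 hv with rfl | hv' <;> rcases Finset.mem_insert.1 hz with rfl | hz'
      · exact fun h => G.loopless.irrefl _ h
      · rw [Finset.mem_singleton.1 hz']; exact hnadj
      · rw [Finset.mem_singleton.1 hv']; exact fun h => hnadj h.symm
      · rw [Finset.mem_singleton.1 hv', Finset.mem_singleton.1 hz']
        exact fun h => G.loopless.irrefl _ h
  · -- pairwise disjoint
    intro I hI I' hI' hII' v hv hv'
    have hmem : ∀ {B : Finset V}, B ∈ ({A₁, A₂, ({w, w'} : Finset V)} : Finset (Finset V)) →
        B = A₁ ∨ B = A₂ ∨ B = ({w, w'} : Finset V) := by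
      intro B hB
      simpa only [Finset.mem_insert, Finset.mem_singleton] using hB
    have hvA₁ : v ∈ A₁ → v = x ∨ (v ∈ J ∧ v ≠ w) := by
      intro h
      rcases Finset.mem_insert.1 h with rfl | h'
      · exact Or.inl rfl
      · exact Or.inr ⟨Finset.mem_of_mem_erase h', (Finset.mem_erase.1 h').1⟩
    have hvA₂ : v ∈ A₂ → v = x' ∨ (v ∈ J' ∧ v ≠ w') := by
      intro h
      rcases Finset.mem_insert.1 h with rfl | h'
      · exact Or.inl rfl
      · exact Or.inr ⟨Finset.mem_of_mem_erase h', (Finset.mem_erase.1 h').1⟩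
    have key12 : v ∈ A₁ → v ∈ A₂ → False := by
      intro h1 h2
      rcases hvA₁ h1 with rfl | ⟨hvJ, _⟩
      · exact hxA₂ h2
      · rcases hvA₂ h2 with rfl | ⟨hvJ', _⟩
        · exact hx'J hvJ
        · exact hdJJ v hvJ hvJ'
    have key13 : v ∈ A₁ → v ∈ ({w, w'} : Finset V) → False := by
      intro h1 h3
      have hv_or : v = w ∨ v = w' := by simpa using h3
      rcases hv_or with h | h
      · rcases hvA₁ h1 with hx1 | ⟨_, hne⟩
        · exact hwx (h.symm.trans hx1)
        · exact hne h
      · rcases hvA₁ h1 with hx1 | ⟨hvJ, _⟩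
        · exact hw'x (h.symm.trans hx1)
        · exact hdJJ v hvJ (by rw [h]; exact hw'J)
    have key23 : v ∈ A₂ → v ∈ ({w, w'} : Finset V) → False := by
      intro h2 h3
      have hv_or : v = w ∨ v = w' := by simpa using h3
      rcases hv_or with h | h
      · rcases hvA₂ h2 with hx1 | ⟨hvJ', _⟩
        · exact hwx' (h.symm.trans hx1)
        · exact hdJJ v (by rw [h]; exact hwJ) hvJ'
      · rcases hvA₂ h2 with hx1 | ⟨_, hne⟩
        · exact hw'x' (h.symm.trans hx1)
        · exact hne h
    rcases hmem hI with rfl | rfl | rfl <;> rcases hmem hI' with h' | h' | h'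
    · exact hII' h'.symm
    · exact key12 hv (h' ▸ hv')
    · exact key13 hv (h' ▸ hv')
    · exact key12 (h' ▸ hv') hv
    · exact hII' h'.symm
    · exact key23 hv (h' ▸ hv')
    · exact key13 (h' ▸ hv') hv
    · exact key23 (h' ▸ hv') hv
    · exact hII' h'.symm
  · -- coverage
    intro v
    constructor
    · rintro ⟨I, hI, hvI⟩
      simp only [Finset.mem_insert, Finset.mem_singleton] at hI
      rcases hI with rfl | rfl | rfl | rfl
      · have : v = x := Finset.mem_singleton.1 hvI
        subst this
        exact ⟨A₁, by simp, Finset.mem_insert_self _ _⟩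
      · have : v = x' := Finset.mem_singleton.1 hvI
        subst this
        exact ⟨A₂, by simp, Finset.mem_insert_self _ _⟩
      · by_cases hvw : v = w
        · exact ⟨{w, w'}, by simp, by simp [hvw]⟩
        · exact ⟨A₁, by simp, Finset.mem_insert_of_mem (Finset.mem_erase.2 ⟨hvw, hvI⟩)⟩
      · by_cases hvw : v = w'
        · exact ⟨{w, w'}, by simp, by simp [hvw]⟩
        · exact ⟨A₂, by simp, Finset.mem_insert_of_mem (Finset.mem_erase.2 ⟨hvw, hvI⟩)⟩
    · rintro ⟨I, hI, hvI⟩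
      simp only [Finset.mem_insert, Finset.mem_singleton] at hI
      rcases hI with rfl | rfl | rfl
      · rcases Finset.mem_insert.1 hvI with rfl | hv'
        · exact ⟨{v}, by simp, Finset.mem_singleton_self v⟩
        · exact ⟨J, by simp, Finset.mem_of_mem_erase hv'⟩
      · rcases Finset.mem_insert.1 hvI with rfl | hv'
        · exact ⟨{v}, by simp, Finset.mem_singleton_self v⟩
        · exact ⟨J', by simp, Finset.mem_of_mem_erase hv'⟩
      · rcases Finset.mem_insert.1 hvI with rfl | hv'
        · exact ⟨J, by simp, hwJ⟩
        · have : v = w' := Finset.mem_singleton.1 hv'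
          subst this
          exact ⟨J', by simp, hw'J⟩
  · -- r-bounded
    intro I hI
    simp only [Finset.mem_insert, Finset.mem_singleton] at hI
    have hJr := hopt.2.1 J hJ
    have hJ'r := hopt.2.1 J' hJ'
    rcases hI with rfl | rfl | rfl
    · have : x ∉ J.erase w := fun hc => hxJ (Finset.mem_of_mem_erase hc)
      rw [hA₁, Finset.card_insert_of_notMem this, Finset.card_erase_of_mem hwJ]
      omega
    · have : x' ∉ J'.erase w' := fun hc => hx'J' (Finset.mem_of_mem_erase hc)
      rw [hA₂, Finset.card_insert_of_notMem this, Finset.card_erase_of_mem hw'J]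
      omega
    · have : w ∉ ({w'} : Finset V) := by simpa using hww
      rw [Finset.card_insert_of_notMem this, Finset.card_singleton]
      omega
  · -- card E < card D
    have hD4 : ({({x} : Finset V), {x'}, J, J'} : Finset (Finset V)).card = 4 := by
      have h1 : ({x} : Finset V) ≠ {x'} := fun h => hxx (Finset.singleton_injective h)
      rw [Finset.card_insert_of_notMem, Finset.card_insert_of_notMem,
        Finset.card_insert_of_notMem, Finset.card_singleton]
      · simpa using hJJ
      · simp only [Finset.mem_insert, Finset.mem_singleton]
        push_neg
        exact ⟨Ne.symm hJx', Ne.symm hJ'x'⟩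
      · simp only [Finset.mem_insert, Finset.mem_singleton]
        push_neg
        exact ⟨h1, Ne.symm hJx, Ne.symm hJ'x⟩
    have hE3 : ({A₁, A₂, ({w, w'} : Finset V)} : Finset (Finset V)).card ≤ 3 := by
      apply le_trans (Finset.card_insert_le _ _)
      have := Finset.card_insert_le A₂ ({({w, w'} : Finset V)} : Finset (Finset V))
      simp only [Finset.card_singleton] at this ⊢
      omega
    omega

end Aux4
section Aux5
set_option linter.unusedSectionVars false
set_option maxHeartbeats 1000000

variable {G : SimpleGraph V} [DecidableRel G.Adj] {r : ℕ} {C : Finset (Finset V)}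

lemma degree_eq_sum (hC : IsColoring G C) (x : V) :
    G.degree x = ∑ I ∈ C, (I.filter (fun y => G.Adj x y)).card := by
  have hnb : G.neighborFinset x = C.biUnion (fun I => I.filter (fun y => G.Adj x y)) := by
    ext y
    simp only [SimpleGraph.mem_neighborFinset, Finset.mem_biUnion, Finset.mem_filter]
    constructor
    · intro hadj
      obtain ⟨I, ⟨hI, hyI⟩, _⟩ := hC.2.1 y
      exact ⟨I, hI, hyI, hadj⟩
    · rintro ⟨I, _, _, hadj⟩
      exact hadj
  rw [SimpleGraph.degree, hnb]
  exact Finset.card_biUnion (fun I hI J hJ hIJ => by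
    rw [Function.onFun, Finset.disjoint_left]
    intro v hv hv'
    exact not_mem_other hC hI (Finset.mem_filter.1 hv).1 hJ hIJ (Finset.mem_filter.1 hv').1)

/-- The clique number is at least the size of any finset clique. -/
lemma card_le_cliqueNum {t : Finset V} (ht : ∀ a ∈ t, ∀ b ∈ t, a ≠ b → G.Adj a b) :
    t.card ≤ G.cliqueNum := by
  have : G.IsClique (t : Set V) := by
    rw [SimpleGraph.isClique_iff]
    intro a ha b hb hab
    exact ht a ha b hb hab
  exact SimpleGraph.IsClique.card_le_cliqueNum (tc := this)

end Aux5
section Aux6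
set_option linter.unusedSectionVars false
set_option maxHeartbeats 1000000

variable {G : SimpleGraph V} [DecidableRel G.Adj] {r : ℕ}

lemma singleton_coloring_is (G : SimpleGraph V) :
    IsColoring G (Finset.univ.image (fun v : V => ({v} : Finset V))) := by
  refine ⟨?_, ?_, ?_⟩
  · intro I hI
    obtain ⟨v, _, rfl⟩ := Finset.mem_image.1 hI
    exact ⟨v, Finset.mem_singleton_self v⟩
  · intro v
    refine ⟨{v}, ⟨Finset.mem_image.2 ⟨v, Finset.mem_univ v, rfl⟩, Finset.mem_singleton_self v⟩, ?_⟩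
    rintro J ⟨hJ, hvJ⟩
    obtain ⟨u, _, rfl⟩ := Finset.mem_image.1 hJ
    rw [Finset.mem_singleton.1 hvJ]
  · intro I hI v hv w hw
    obtain ⟨u, _, rfl⟩ := Finset.mem_image.1 hI
    rw [Finset.mem_singleton.1 hv, Finset.mem_singleton.1 hw]
    exact fun h => G.loopless.irrefl _ h

lemma exists_optimal (G : SimpleGraph V) [DecidableRel G.Adj] (r : ℕ) (hr : 2 ≤ r) :
    ∃ C : Finset (Finset V), IsOptimalRBounded G r C := by
  have hne : {n | ∃ C : Finset (Finset V), IsColoring G C ∧ RBounded r C ∧ C.card = n}.Nonempty := by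
    refine ⟨_, Finset.univ.image (fun v : V => ({v} : Finset V)), singleton_coloring_is G, ?_, rfl⟩
    intro I hI
    obtain ⟨v, _, rfl⟩ := Finset.mem_image.1 hI
    simp only [Finset.card_singleton]
    omega
  obtain ⟨C, hC, hB, hcard⟩ := Nat.sInf_mem hne
  exact ⟨C, hC, hB, hcard⟩

lemma exists_stingy (G : SimpleGraph V) [DecidableRel G.Adj] (r : ℕ) (hr : 2 ≤ r) :
    ∃ C : Finset (Finset V), IsOptimalRBounded G r C ∧
      (C.filter fun I => I.card = 1).card = stinginessR G r := by
  have hne : {n | ∃ C : Finset (Finset V), IsOptimalRBounded G r C ∧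
      (C.filter fun I => I.card = 1).card = n}.Nonempty := by
    obtain ⟨C, hC⟩ := exists_optimal G r hr
    exact ⟨_, C, hC, rfl⟩
  have hbdd : BddAbove {n | ∃ C : Finset (Finset V), IsOptimalRBounded G r C ∧
      (C.filter fun I => I.card = 1).card = n} := by
    refine ⟨chiR G r, ?_⟩
    rintro n ⟨C, hC, rfl⟩
    calc (C.filter fun I => I.card = 1).card ≤ C.card := Finset.card_filter_le _ _
      _ = chiR G r := hC.2.2
  obtain ⟨C, hC, hcard⟩ := Nat.sSup_mem hne hbdd
  exact ⟨C, hC, hcard⟩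

lemma Mr_ge (hr : 2 ≤ r) {C : Finset (Finset V)} (hC : IsOptimalRBounded G r C) :
    (C.filter fun I => I.card = r).card ≤ Mr G r := by
  have hbdd : BddAbove {n | ∃ C : Finset (Finset V), IsOptimalRBounded G r C ∧
      (C.filter fun I => I.card = r).card = n} := by
    refine ⟨chiR G r, ?_⟩
    rintro n ⟨C', hC', rfl⟩
    calc (C'.filter fun I => I.card = r).card ≤ C'.card := Finset.card_filter_le _ _
      _ = chiR G r := hC'.2.2
  exact le_csSup hbdd ⟨C, hC, rfl⟩

end Aux6
section Aux7
set_option linter.unusedSectionVars false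
set_option maxHeartbeats 2000000

variable {G : SimpleGraph V} [DecidableRel G.Adj] {r : ℕ} {C : Finset (Finset V)}

lemma get_wit {x : V} {I : Finset V} (hd : (I.filter (fun y => G.Adj x y)).card = 1) :
    ∃ w ∈ I, ∀ z ∈ I, G.Adj x z ↔ z = w := by
  obtain ⟨w, hw⟩ := Finset.card_eq_one.1 hd
  have hwmem : w ∈ I.filter (fun y => G.Adj x y) := hw ▸ Finset.mem_singleton_self w
  refine ⟨w, (Finset.mem_filter.1 hwmem).1, fun z hz => ⟨fun hadj => ?_, fun h => ?_⟩⟩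
  · have : z ∈ I.filter (fun y => G.Adj x y) := Finset.mem_filter.2 ⟨hz, hadj⟩
    rw [hw] at this
    exact Finset.mem_singleton.1 this
  · exact h ▸ (Finset.mem_filter.1 hwmem).2

lemma wit_ne_sing (hC : IsColoring G C) {w y : V} {J : Finset V}
    (hJ : J ∈ C) (hJ2 : 2 ≤ J.card) (hwJ : w ∈ J) (hy : {y} ∈ C) : w ≠ y := by
  intro h
  have hJy : ({y} : Finset V) ≠ J := by intro h2; rw [← h2] at hJ2; simp at hJ2
  exact not_mem_other hC hy (Finset.mem_singleton_self y) hJ hJy (h ▸ hwJ)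

lemma wit_K (hr : 2 ≤ r) (hopt : IsOptimalRBounded G r C) {x w : V} {J : Finset V}
    (hx : {x} ∈ C) (hJ : J ∈ C) (hJ2 : 2 ≤ J.card) (hwJ : w ∈ J)
    (hw : ∀ z ∈ J, G.Adj x z ↔ z = w) : ∀ y, {y} ∈ C → G.Adj w y := by
  intro y hy
  by_cases hyx : y = x
  · subst hyx
    exact ((hw w hwJ).2 rfl).symm
  · exact wit_adj hr hopt hx hJ hJ2 hwJ hw hy hyx

/-- The key lemma: some singleton pivot `x` satisfies `s + b x ≤ ω`. -/
lemma key_lemma (hr : 2 ≤ r) (hopt : IsOptimalRBounded G r C)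
    (hbig : G.cliqueNum + 1 ≤ 2 * (Finset.univ.filter (fun x : V => {x} ∈ C)).card) :
    ∃ x ∈ Finset.univ.filter (fun x : V => {x} ∈ C),
      (Finset.univ.filter (fun x : V => {x} ∈ C)).card +
        (C.filter (fun I => 2 ≤ I.card ∧ I.card < r ∧
          (I.filter (fun y => G.Adj x y)).card = 1)).card ≤ G.cliqueNum := by
  classical
  set K := Finset.univ.filter (fun x : V => {x} ∈ C) with hK
  set s := K.card with hs
  have hKmem : ∀ x, x ∈ K ↔ {x} ∈ C := by
    intro x; simp [hK]
  have hKcl : ∀ a ∈ K, ∀ b ∈ K, a ≠ b → G.Adj a b := by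
    intro a ha b hb hab
    exact sing_adj hr hopt ((hKmem a).1 ha) ((hKmem b).1 hb) hab
  have hs1 : 1 ≤ s := by omega
  obtain ⟨x₀, hx₀⟩ := Finset.card_pos.1 hs1
  haveI : Nonempty V := ⟨x₀⟩
  by_contra hcon
  push_neg at hcon
  -- every pivot has many lonely classes
  have hlb : ∀ x ∈ K, G.cliqueNum + 1 ≤ s +
      (C.filter (fun I => 2 ≤ I.card ∧ I.card < r ∧
        (I.filter (fun y => G.Adj x y)).card = 1)).card := by
    intro x hx
    have := hcon x hx
    omega
  -- shared lonely classes
  set SH := C.filter (fun I => 2 ≤ I.card ∧ I.card < r ∧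
    ∃ x ∈ K, ∃ y ∈ K, x ≠ y ∧ (I.filter (fun z => G.Adj x z)).card = 1 ∧
      (I.filter (fun z => G.Adj y z)).card = 1) with hSH
  by_cases hcase : G.cliqueNum + 1 ≤ s + SH.card
  · -- CASE I: many shared classes; build the clique K ∪ wits(SH)
    -- canonical pivot and wit for each shared class
    have hex : ∀ I : Finset V, ∃ x w, I ∈ SH → (x ∈ K ∧ w ∈ I ∧
        (∀ z ∈ I, G.Adj x z ↔ z = w)) := by
      intro I
      by_cases hI : I ∈ SH
      · obtain ⟨hIC, hI2, hIr, x, hxK, y, hyK, hxy, hdx, hdy⟩ := Finset.mem_filter.1 hI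
        obtain ⟨w, hwI, hw⟩ := get_wit hdx
        exact ⟨x, w, fun _ => ⟨hxK, hwI, hw⟩⟩
      · exact ⟨Classical.arbitrary V, Classical.arbitrary V, fun h => absurd h hI⟩
    choose piv wit hpw using hex
    -- wits are adjacent to all of K
    have hwitK : ∀ I ∈ SH, ∀ y ∈ K, G.Adj (wit I) y := by
      intro I hI y hy
      obtain ⟨hIC, hI2, hIr, _⟩ := Finset.mem_filter.1 hI
      obtain ⟨hpK, hwI, hw⟩ := hpw I hI
      exact wit_K hr hopt ((hKmem _).1 hpK) hIC hI2 hwI hw y ((hKmem y).1 hy)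
    -- wits of distinct shared classes are adjacent
    have hwitwit : ∀ I ∈ SH, ∀ I' ∈ SH, I ≠ I' → G.Adj (wit I) (wit I') := by
      intro I hI I' hI' hII'
      obtain ⟨hIC, hI2, hIr, _⟩ := Finset.mem_filter.1 hI
      obtain ⟨hIC', hI2', hIr', x', hxK', y', hyK', hxy', hdx', hdy'⟩ := Finset.mem_filter.1 hI'
      obtain ⟨hpK, hwI, hw⟩ := hpw I hI
      obtain ⟨hpK', hwI', hw'⟩ := hpw I' hI'
      -- choose a pivot for I' distinct from piv I
      by_cases hpp : piv I = piv I'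
      · -- use one of the two distinct pivots of I'
        have : ∃ z ∈ K, z ≠ piv I ∧ (I'.filter (fun u => G.Adj z u)).card = 1 := by
          by_cases hx'p : x' = piv I
          · refine ⟨y', hyK', ?_, hdy'⟩
            intro h; exact hxy' (hx'p.trans h.symm)
          · exact ⟨x', hxK', hx'p, hdx'⟩
        obtain ⟨z, hzK, hzp, hdz⟩ := this
        obtain ⟨w'', hw''I, hw''⟩ := get_wit hdz
        have hsame : w'' = wit I' := by
          refine same_wit hr hopt ((hKmem z).1 hzK) ((hKmem _).1 hpK') ?_ hIC' hI2'
            hw''I hw'' hwI' hw'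
          intro h; exact hzp (h.trans hpp.symm)
        rw [← hsame]
        exact cross_adj hr hopt ((hKmem _).1 hpK) ((hKmem z).1 hzK) (fun h => hzp h.symm)
          hIC hIC' hII' hI2 hI2' hwI hw hw''I hw''
      · exact cross_adj hr hopt ((hKmem _).1 hpK) ((hKmem _).1 hpK') hpp
          hIC hIC' hII' hI2 hI2' hwI hw hwI' hw'
    -- the clique
    set W := SH.image wit with hW
    have hWcard : W.card = SH.card := by
      rw [hW]
      apply Finset.card_image_of_injOn
      intro I hI I' hI' hww
      by_contra hne
      obtain ⟨hIC, _, _, _⟩ := Finset.mem_filter.1 hI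
      obtain ⟨hIC', _, _, _⟩ := Finset.mem_filter.1 hI'
      obtain ⟨_, hwI, _⟩ := hpw I hI
      obtain ⟨_, hwI', _⟩ := hpw I' hI'
      exact not_mem_other hopt.1 hIC hwI hIC' hne (hww ▸ hwI')
    have hdisjKW : Disjoint K W := by
      rw [Finset.disjoint_right]
      intro w hwW hwK
      obtain ⟨I, hI, rfl⟩ := Finset.mem_image.1 hwW
      obtain ⟨hIC, hI2, _, _⟩ := Finset.mem_filter.1 hI
      obtain ⟨_, hwI, _⟩ := hpw I hI
      exact wit_ne_sing hopt.1 hIC hI2 hwI ((hKmem _).1 hwK) rfl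
    have hclique : ∀ a ∈ K ∪ W, ∀ b ∈ K ∪ W, a ≠ b → G.Adj a b := by
      intro a ha b hb hab
      rcases Finset.mem_union.1 ha with ha' | ha' <;> rcases Finset.mem_union.1 hb with hb' | hb'
      · exact hKcl a ha' b hb' hab
      · obtain ⟨I, hI, rfl⟩ := Finset.mem_image.1 hb'
        exact (hwitK I hI a ha').symm
      · obtain ⟨I, hI, rfl⟩ := Finset.mem_image.1 ha'
        exact hwitK I hI b hb'
      · obtain ⟨I, hI, rfl⟩ := Finset.mem_image.1 ha'
        obtain ⟨I', hI', rfl⟩ := Finset.mem_image.1 hb'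
        have hII' : I ≠ I' := fun h => hab (h ▸ rfl)
        exact hwitwit I hI I' hI' hII'
    have hcard : (K ∪ W).card = s + SH.card := by
      rw [Finset.card_union_of_disjoint hdisjKW, hWcard]
    have := card_le_cliqueNum hclique
    rw [hcard] at this
    omega
  · -- CASE II: few shared classes; every pivot has a private lonely class
    push_neg at hcase
    -- for each pivot choose a private lonely class and its wit
    have hex : ∀ x : V, ∃ J w, x ∈ K → (J ∈ C ∧ 2 ≤ J.card ∧ J.card < r ∧ w ∈ J ∧
        (∀ z ∈ J, G.Adj x z ↔ z = w) ∧ J ∉ SH) := by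
      intro x
      by_cases hx : x ∈ K
      · have h1 : SH.card < (C.filter (fun I => 2 ≤ I.card ∧ I.card < r ∧
            (I.filter (fun y => G.Adj x y)).card = 1)).card := by
          have := hlb x hx
          omega
        have h2 : ¬ (C.filter (fun I => 2 ≤ I.card ∧ I.card < r ∧
            (I.filter (fun y => G.Adj x y)).card = 1)) ⊆ SH := by
          intro hss
          exact absurd (Finset.card_le_card hss) (by omega)
        obtain ⟨J, hJmem, hJnot⟩ := Finset.not_subset.1 h2
        obtain ⟨hJC, hJ2, hJr, hdx⟩ := Finset.mem_filter.1 hJmem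
        obtain ⟨w, hwJ, hw⟩ := get_wit hdx
        exact ⟨J, w, fun _ => ⟨hJC, hJ2, hJr, hwJ, hw, hJnot⟩⟩
      · exact ⟨∅, Classical.arbitrary V, fun h => absurd h hx⟩
    choose Jf wf hJf using hex
    -- private classes are distinct across pivots
    have hJinj : ∀ x ∈ K, ∀ y ∈ K, x ≠ y → Jf x ≠ Jf y := by
      intro x hx y hy hxy heq
      obtain ⟨hJC, hJ2, hJr, hwJ, hw, hnSH⟩ := hJf x hx
      obtain ⟨hJC', hJ2', hJr', hwJ', hw', hnSH'⟩ := hJf y hy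
      apply hnSH
      rw [hSH, Finset.mem_filter]
      refine ⟨hJC, hJ2, hJr, x, hx, y, hy, hxy, ?_, ?_⟩
      · rw [Finset.card_eq_one]
        refine ⟨wf x, ?_⟩
        ext z
        simp only [Finset.mem_filter, Finset.mem_singleton]
        constructor
        · rintro ⟨hz, hadj⟩; exact (hw z hz).1 hadj
        · rintro rfl; exact ⟨hwJ, (hw _ hwJ).2 rfl⟩
      · rw [Finset.card_eq_one]
        refine ⟨wf y, ?_⟩
        ext z
        simp only [Finset.mem_filter, Finset.mem_singleton]
        constructor
        · rintro ⟨hz, hadj⟩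
          rw [heq] at hz
          exact (hw' z hz).1 hadj
        · rintro rfl
          rw [heq]
          exact ⟨hwJ', (hw' _ hwJ').2 rfl⟩
    -- wits adjacent to K
    have hwfK : ∀ x ∈ K, ∀ y ∈ K, G.Adj (wf x) y := by
      intro x hx y hy
      obtain ⟨hJC, hJ2, hJr, hwJ, hw, _⟩ := hJf x hx
      exact wit_K hr hopt ((hKmem x).1 hx) hJC hJ2 hwJ hw y ((hKmem y).1 hy)
    -- wits pairwise adjacent
    have hwfwf : ∀ x ∈ K, ∀ y ∈ K, x ≠ y → G.Adj (wf x) (wf y) := by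
      intro x hx y hy hxy
      obtain ⟨hJC, hJ2, hJr, hwJ, hw, _⟩ := hJf x hx
      obtain ⟨hJC', hJ2', hJr', hwJ', hw', _⟩ := hJf y hy
      exact cross_adj hr hopt ((hKmem x).1 hx) ((hKmem y).1 hy) hxy hJC hJC'
        (hJinj x hx y hy hxy) hJ2 hJ2' hwJ hw hwJ' hw'
    -- build the 2s-clique
    set W := K.image wf with hW
    have hWcard : W.card = s := by
      rw [hW]
      apply Finset.card_image_of_injOn
      intro x hx y hy hww
      by_contra hne
      obtain ⟨hJC, _, _, hwJ, _, _⟩ := hJf x hx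
      obtain ⟨hJC', _, _, hwJ', _, _⟩ := hJf y hy
      exact not_mem_other hopt.1 hJC hwJ hJC' (hJinj x hx y hy hne) (hww ▸ hwJ')
    have hdisjKW : Disjoint K W := by
      rw [Finset.disjoint_right]
      intro w hwW hwK
      obtain ⟨x, hx, rfl⟩ := Finset.mem_image.1 hwW
      obtain ⟨hJC, hJ2, _, hwJ, _, _⟩ := hJf x hx
      exact wit_ne_sing hopt.1 hJC hJ2 hwJ ((hKmem _).1 hwK) rfl
    have hclique : ∀ a ∈ K ∪ W, ∀ b ∈ K ∪ W, a ≠ b → G.Adj a b := by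
      intro a ha b hb hab
      rcases Finset.mem_union.1 ha with ha' | ha' <;> rcases Finset.mem_union.1 hb with hb' | hb'
      · exact hKcl a ha' b hb' hab
      · obtain ⟨x, hx, rfl⟩ := Finset.mem_image.1 hb'
        exact (hwfK x hx a ha').symm
      · obtain ⟨x, hx, rfl⟩ := Finset.mem_image.1 ha'
        exact hwfK x hx b hb'
      · obtain ⟨x, hx, rfl⟩ := Finset.mem_image.1 ha'
        obtain ⟨y, hy, rfl⟩ := Finset.mem_image.1 hb'
        have hxy : x ≠ y := fun h => hab (h ▸ rfl)
        exact hwfwf x hx y hy hxy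
    have hcard : (K ∪ W).card = 2 * s := by
      rw [Finset.card_union_of_disjoint hdisjKW, hWcard]
      omega
    have := card_le_cliqueNum hclique
    rw [hcard] at this
    omega

end Aux7
section Aux8
set_option linter.unusedSectionVars false
set_option maxHeartbeats 2000000

variable {G : SimpleGraph V} [DecidableRel G.Adj] {r : ℕ} {C : Finset (Finset V)}

lemma main_ineq (hr : 2 ≤ r) (hopt : IsOptimalRBounded G r C)
    (hbig : G.cliqueNum + 1 ≤ 2 * (C.filter fun I => I.card = 1).card) :
    2 * C.card ≤ G.cliqueNum + G.maxDegree + 1 + 2 * (C.filter fun I => I.card = r).card := by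
  classical
  set K := Finset.univ.filter (fun x : V => {x} ∈ C) with hK
  have hSK : C.filter (fun I => I.card = 1) = K.image (fun x => ({x} : Finset V)) := by
    ext I
    simp only [Finset.mem_filter, Finset.mem_image, hK, Finset.mem_univ, true_and]
    constructor
    · rintro ⟨hIC, hI1⟩
      obtain ⟨x, rfl⟩ := Finset.card_eq_one.1 hI1
      exact ⟨x, hIC, rfl⟩
    · rintro ⟨x, hx, rfl⟩
      exact ⟨hx, Finset.card_singleton x⟩
  have hKcard : K.card = (C.filter fun I => I.card = 1).card := by
    rw [hSK, Finset.card_image_of_injective _ Finset.singleton_injective]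
  -- get the good pivot
  obtain ⟨x, hxK, hkey⟩ := key_lemma hr hopt (by rw [hKcard]; exact hbig)
  have hxC : ({x} : Finset V) ∈ C := by
    simpa [hK] using hxK
  -- class counting
  set FF := C.filter (fun I => I.card = r) with hFF
  set NF := C.filter (fun I => I.card < r) with hNF
  have hCsplit : NF.card + FF.card = C.card := by
    have h1 := Finset.card_filter_add_card_filter_not
      (s := C) (p := fun I => I.card < r)
    have h2 : C.filter (fun I => ¬ I.card < r) = FF := by
      ext I
      simp only [Finset.mem_filter, hFF]
      constructor
      · rintro ⟨hIC, hge⟩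
        have := hopt.2.1 I hIC
        exact ⟨hIC, by omega⟩
      · rintro ⟨hIC, heq⟩
        exact ⟨hIC, by omega⟩
    rw [h2] at h1
    exact h1
  set S := NF.filter (fun I => I.card = 1) with hS
  set T := NF.filter (fun I => ¬ I.card = 1) with hT
  have hNFsplit : S.card + T.card = NF.card :=
    Finset.card_filter_add_card_filter_not (s := NF) (p := fun I => I.card = 1)
  have hScard : S = C.filter (fun I => I.card = 1) := by
    rw [hS, hNF, Finset.filter_filter]
    ext I
    simp only [Finset.mem_filter]
    constructor
    · rintro ⟨hIC, _, h1⟩; exact ⟨hIC, h1⟩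
    · rintro ⟨hIC, h1⟩; exact ⟨hIC, by omega, h1⟩
  set B := T.filter (fun I => (I.filter (fun y => G.Adj x y)).card = 1) with hB
  set A := T.filter (fun I => ¬ (I.filter (fun y => G.Adj x y)).card = 1) with hA
  have hTsplit : B.card + A.card = T.card :=
    Finset.card_filter_add_card_filter_not (s := T)
      (p := fun I => (I.filter (fun y => G.Adj x y)).card = 1)
  have hT2 : ∀ I ∈ T, I ∈ C ∧ 2 ≤ I.card ∧ I.card < r := by
    intro I hI
    obtain ⟨hINF, hne1⟩ := Finset.mem_filter.1 hI
    obtain ⟨hIC, hlt⟩ := Finset.mem_filter.1 hINF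
    have hpos : 0 < I.card := Finset.card_pos.2 (hopt.1.1 I hIC)
    exact ⟨hIC, by omega, hlt⟩
  have hBcard : B = C.filter (fun I => 2 ≤ I.card ∧ I.card < r ∧
      (I.filter (fun y => G.Adj x y)).card = 1) := by
    ext I
    constructor
    · intro hI
      obtain ⟨hIT, hd⟩ := Finset.mem_filter.1 hI
      obtain ⟨hIC, h2, hlt⟩ := hT2 I hIT
      exact Finset.mem_filter.2 ⟨hIC, h2, hlt, hd⟩
    · intro hI
      obtain ⟨hIC, h2, hlt, hd⟩ := Finset.mem_filter.1 hI
      refine Finset.mem_filter.2 ⟨Finset.mem_filter.2 ⟨Finset.mem_filter.2 ⟨hIC, hlt⟩, ?_⟩, hd⟩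
      omega
  -- degree bound
  have hdeg : S.card - 1 + B.card + 2 * A.card ≤ G.degree x := by
    rw [degree_eq_sum hopt.1 x]
    -- disjointness
    have hdST : Disjoint S T := Finset.disjoint_filter_filter_not NF NF _
    have hdBA : Disjoint B A := Finset.disjoint_filter_filter_not T T _
    have hdSB : Disjoint S B := hdST.mono_right (Finset.filter_subset _ _)
    have hdSA : Disjoint S A := hdST.mono_right (Finset.filter_subset _ _)
    have hsub : S ∪ B ∪ A ⊆ C := by
      intro I hI
      rcases Finset.mem_union.1 hI with hI' | hI'
      · rcases Finset.mem_union.1 hI' with hI'' | hI''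
        · exact (Finset.mem_filter.1 (Finset.mem_filter.1 hI'').1).1
        · exact (hT2 I (Finset.mem_filter.1 hI'').1).1
      · exact (hT2 I (Finset.mem_filter.1 hI').1).1
    have hsum1 : ∑ I ∈ S ∪ B ∪ A, (I.filter (fun y => G.Adj x y)).card ≤
        ∑ I ∈ C, (I.filter (fun y => G.Adj x y)).card :=
      Finset.sum_le_sum_of_subset hsub
    have hsum2 : ∑ I ∈ S ∪ B ∪ A, (I.filter (fun y => G.Adj x y)).card =
        ∑ I ∈ S, (I.filter (fun y => G.Adj x y)).card +
        ∑ I ∈ B, (I.filter (fun y => G.Adj x y)).card +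
        ∑ I ∈ A, (I.filter (fun y => G.Adj x y)).card := by
      rw [Finset.sum_union (by
        refine Finset.disjoint_union_left.2 ⟨hdSA, hdBA⟩), Finset.sum_union hdSB]
    -- bound on S
    have hxS : ({x} : Finset V) ∈ S := by
      rw [hScard]
      exact Finset.mem_filter.2 ⟨hxC, Finset.card_singleton x⟩
    have hsumS : S.card - 1 ≤ ∑ I ∈ S, (I.filter (fun y => G.Adj x y)).card := by
      have h1 : ∀ I ∈ S.erase {x}, 1 ≤ (I.filter (fun y => G.Adj x y)).card := by
        intro I hI
        obtain ⟨hne, hIS⟩ := Finset.mem_erase.1 hI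
        have hIS' := hScard ▸ hIS
        obtain ⟨hIC, hI1⟩ := Finset.mem_filter.1 hIS'
        obtain ⟨y, rfl⟩ := Finset.card_eq_one.1 hI1
        have hyx : y ≠ x := fun h => hne (h ▸ rfl)
        have hadj : G.Adj x y := sing_adj hr hopt hxC hIC (fun h => hyx h.symm)
        exact Finset.card_pos.2 ⟨y, Finset.mem_filter.2 ⟨Finset.mem_singleton_self y, hadj⟩⟩
      calc S.card - 1 = (S.erase {x}).card := (Finset.card_erase_of_mem hxS).symm
        _ = ∑ _I ∈ S.erase {x}, 1 := by simp
        _ ≤ ∑ I ∈ S.erase {x}, (I.filter (fun y => G.Adj x y)).card :=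
            Finset.sum_le_sum h1
        _ ≤ ∑ I ∈ S, (I.filter (fun y => G.Adj x y)).card :=
            Finset.sum_le_sum_of_subset (Finset.erase_subset _ _)
    -- bound on B
    have hsumB : ∑ I ∈ B, (I.filter (fun y => G.Adj x y)).card = B.card := by
      rw [Finset.sum_congr rfl (fun I hI => (Finset.mem_filter.1 hI).2)]
      simp
      rfl
    -- bound on A
    have hsumA : 2 * A.card ≤ ∑ I ∈ A, (I.filter (fun y => G.Adj x y)).card := by
      have h1 : ∀ I ∈ A, 2 ≤ (I.filter (fun y => G.Adj x y)).card := by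
        intro I hI
        obtain ⟨hIT, hdne⟩ := Finset.mem_filter.1 hI
        obtain ⟨hIC, hI2, hIr⟩ := hT2 I hIT
        have hIx : I ≠ ({x} : Finset V) := by
          intro h; rw [h] at hI2; simp at hI2
        obtain ⟨y, hyI, hadj⟩ := exists_nbr hopt hxC hIC hIx hIr
        have : 1 ≤ (I.filter (fun y => G.Adj x y)).card :=
          Finset.card_pos.2 ⟨y, Finset.mem_filter.2 ⟨hyI, hadj⟩⟩
        omega
      calc 2 * A.card = ∑ _I ∈ A, 2 := by simp [mul_comm]
        _ ≤ ∑ I ∈ A, (I.filter (fun y => G.Adj x y)).card := Finset.sum_le_sum h1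
    omega
  have hdegmax : G.degree x ≤ G.maxDegree := G.degree_le_maxDegree x
  have hs1 : 1 ≤ S.card := Finset.card_pos.2 ⟨{x}, by
    rw [hScard]; exact Finset.mem_filter.2 ⟨hxC, Finset.card_singleton x⟩⟩
  have hkey' : (C.filter fun I => I.card = 1).card +
      (C.filter (fun I => 2 ≤ I.card ∧ I.card < r ∧
        (I.filter (fun y => G.Adj x y)).card = 1)).card ≤ G.cliqueNum := by
    rw [← hKcard]
    exact hkey
  rw [← hBcard, ← hScard] at hkey'
  omega

end Aux8

theorem statement_17' (G : SimpleGraph V) [DecidableRel G.Adj] (r : ℕ) (hr : 2 ≤ r)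
    (h : (G.cliqueNum : ℝ) / 2 < (stinginessR G r : ℝ)) :
    (chiR G r : ℝ) - Mr G r ≤ ((G.cliqueNum : ℝ) + G.maxDegree + 1) / 2 := by
  obtain ⟨C, hopt, hsting⟩ := exists_stingy G r hr
  have hbig : G.cliqueNum + 1 ≤ 2 * (C.filter fun I => I.card = 1).card := by
    rw [hsting]
    have : (G.cliqueNum : ℝ) < 2 * (stinginessR G r : ℝ) := by linarith
    have h2 : G.cliqueNum < 2 * stinginessR G r := by exact_mod_cast this
    omega
  have hmain := main_ineq hr hopt hbig
  have hMr := Mr_ge hr hopt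
  have hchi : C.card = chiR G r := hopt.2.2
  have hfinal : 2 * chiR G r ≤ G.cliqueNum + G.maxDegree + 1 + 2 * Mr G r := by omega
  have hcast : (2 * chiR G r : ℝ) ≤ (G.cliqueNum : ℝ) + G.maxDegree + 1 + 2 * Mr G r := by
    exact_mod_cast hfinal
  push_cast at hcast
  linarith

theorem statement_17 (G : SimpleGraph V) [DecidableRel G.Adj] (r : ℕ) (hr : 2 ≤ r)
    (h : (G.cliqueNum : ℝ) / 2 < (stinginessR G r : ℝ)) :
    (chiR G r : ℝ) - Mr G r ≤ ((G.cliqueNum : ℝ) + G.maxDegree + 1) / 2 := by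
  exact statement_17' G r hr h
end

section
/- For every finite simple graph G, the matching number satisfies ν(G) ≥ (|G| − α(G) + δ(G))/4. -/
open Finset

variable {V : Type*} [Fintype V] [DecidableEq V]

lemma aux_verts_le (G : SimpleGraph V) (M : G.Subgraph) (h : M.IsMatching) :
    M.verts.ncard ≤ 2 * M.edgeSet.ncard := by
  classical
  set s := (Set.toFinite M.verts).toFinset with hs
  set t := (Set.toFinite M.edgeSet).toFinset with ht
  have hf : ∀ v : V, ∀ hv : v ∈ M.verts, M.Adj v (h hv).choose := fun v hv =>
    (h hv).choose_spec.1
  set f : V → Sym2 V := fun v => if hv : v ∈ M.verts then s(v, (h hv).choose) else s(v, v)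
    with hfdef
  have hmaps : ∀ v ∈ s, f v ∈ t := by
    intro v hv
    rw [Set.Finite.mem_toFinset] at hv
    simp only [hfdef, dif_pos hv, ht, Set.Finite.mem_toFinset, SimpleGraph.Subgraph.mem_edgeSet]
    exact hf v hv
  have hfiber : ∀ e ∈ t, (s.filter fun v => f v = e).card ≤ 2 := by
    intro e _
    induction e with
    | h a b =>
      have hsub : (s.filter fun v => f v = s(a, b)) ⊆ {a, b} := by
        intro v hv
        rw [Finset.mem_filter] at hv
        obtain ⟨hvs, hve⟩ := hv
        rw [Set.Finite.mem_toFinset] at hvs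
        have hvmem : v ∈ (s(a, b) : Sym2 V) := by
          rw [← hve]
          simp only [hfdef, dif_pos hvs]
          exact Sym2.mem_mk_left _ _
        rw [Sym2.mem_iff] at hvmem
        simpa using hvmem
      calc (s.filter fun v => f v = s(a, b)).card ≤ ({a, b} : Finset V).card :=
            Finset.card_le_card hsub
        _ ≤ 2 := Finset.card_insert_le _ _ |>.trans (by simp)
  have : s.card ≤ 2 * t.card := Finset.card_le_mul_card_image_of_maps_to hmaps 2 hfiber
  rwa [Set.ncard_eq_toFinset_card M.verts, Set.ncard_eq_toFinset_card M.edgeSet]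

lemma aux_augment (G : SimpleGraph V) (M : G.Subgraph) (hM : M.IsMatching)
    (hmax : ∀ M' : G.Subgraph, M'.IsMatching → M'.edgeSet.ncard ≤ M.edgeSet.ncard)
    {v w : V} (hv : v ∉ M.verts) (hw : w ∉ M.verts) (hadj : G.Adj v w) : False := by
  classical
  set M' := M ⊔ G.subgraphOfAdj hadj with hM'def
  have hdisj : Disjoint M.support (G.subgraphOfAdj hadj).support := by
    rw [hM.support_eq_verts, SimpleGraph.support_subgraphOfAdj]
    rw [Set.disjoint_right]
    rintro x hx
    simp only [Set.mem_insert_iff, Set.mem_singleton_iff] at hx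
    rcases hx with rfl | rfl <;> assumption
  have hM' : M'.IsMatching :=
    hM.sup (SimpleGraph.Subgraph.IsMatching.subgraphOfAdj hadj) hdisj
  have hE : M'.edgeSet = insert s(v, w) M.edgeSet := by
    rw [hM'def, SimpleGraph.Subgraph.edgeSet_sup, SimpleGraph.edgeSet_subgraphOfAdj,
      Set.union_comm, Set.insert_eq]
  have hnot : s(v, w) ∉ M.edgeSet := fun hc =>
    hv (M.edge_vert (SimpleGraph.Subgraph.mem_edgeSet.mp hc))
  have hle := hmax M' hM'
  rw [hE, Set.ncard_insert_of_notMem hnot (Set.toFinite _)] at hle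
  omega

theorem statement_19 (G : SimpleGraph V) [DecidableRel G.Adj] :
    ((Fintype.card V : ℝ) - indepNum G + G.minDegree) / 4
      ≤ (matchingNumber G : ℝ) := by
  classical
  set n := Fintype.card V with hn
  -- the matching number is attained
  have hbdd : BddAbove {m | ∃ M : G.Subgraph, M.IsMatching ∧ M.edgeSet.ncard = m} := by
    refine ⟨Fintype.card (Sym2 V), ?_⟩
    rintro m ⟨M, _, rfl⟩
    calc M.edgeSet.ncard ≤ (Set.univ : Set (Sym2 V)).ncard :=
        Set.ncard_le_ncard (Set.subset_univ _) (Set.toFinite _)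
      _ = Fintype.card (Sym2 V) := by rw [Set.ncard_univ, Nat.card_eq_fintype_card]
  have h0 : 0 ∈ {m | ∃ M : G.Subgraph, M.IsMatching ∧ M.edgeSet.ncard = m} := by
    refine ⟨⊥, ?_, by simp⟩
    intro v hv
    simp only [SimpleGraph.Subgraph.verts_bot, Set.mem_empty_iff_false] at hv
  have hmem := Nat.sSup_mem ⟨0, h0⟩ hbdd
  obtain ⟨M, hM, hcard⟩ := hmem
  have hmax : ∀ M' : G.Subgraph, M'.IsMatching → M'.edgeSet.ncard ≤ M.edgeSet.ncard := by
    intro M' hM'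
    rw [hcard]
    exact le_csSup hbdd ⟨M', hM', rfl⟩
  set ν := matchingNumber G with hν
  set k := M.verts.ncard with hk
  have hk2 : k ≤ 2 * ν := by
    have := aux_verts_le G M hM
    rwa [hcard] at this
  -- independence bound
  set u := (Set.toFinite M.vertsᶜ).toFinset with hu
  have hind : ∀ v ∈ u, ∀ w ∈ u, ¬ G.Adj v w := by
    intro v hv w hw hadj
    rw [hu, Set.Finite.mem_toFinset, Set.mem_compl_iff] at hv hw
    exact aux_augment G M hM hmax hv hw hadj
  have hαbdd : BddAbove {m | ∃ s : Finset V, (∀ v ∈ s, ∀ w ∈ s, ¬ G.Adj v w) ∧ s.card = m} := by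
    refine ⟨n, ?_⟩
    rintro m ⟨s, _, rfl⟩
    exact Finset.card_le_univ s
  have hα : u.card ≤ indepNum G := le_csSup hαbdd ⟨u, hind, rfl⟩
  have hucard : k + u.card = n := by
    have h1 : M.vertsᶜ.ncard = u.card := Set.ncard_eq_toFinset_card _ _
    have h2 := Set.ncard_add_ncard_compl M.verts
    rw [Nat.card_eq_fintype_card] at h2
    omega
  have hnαk : n ≤ indepNum G + k := by omega
  -- min degree bound
  have hδ : G.minDegree ≤ 2 * ν := by
    by_cases hsp : M.verts = Set.univ
    · rcases isEmpty_or_nonempty V with hV | hV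
      · simp [SimpleGraph.minDegree, Finset.univ_eq_empty]
      · obtain ⟨v⟩ := hV
        have h1 : G.minDegree ≤ G.degree v := G.minDegree_le_degree v
        have h2 : G.degree v < n := G.degree_lt_card_verts v
        have h3 : k = n := by
          rw [hk, hsp, Set.ncard_univ, Nat.card_eq_fintype_card]
        omega
    · obtain ⟨v, hv⟩ : ∃ v, v ∉ M.verts := by
        by_contra hc
        push_neg at hc
        exact hsp (Set.eq_univ_of_forall hc)
      have hnbr : G.neighborFinset v ⊆ (Set.toFinite M.verts).toFinset := by
        intro w hw
        rw [SimpleGraph.mem_neighborFinset] at hw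
        rw [Set.Finite.mem_toFinset]
        by_contra hwc
        exact aux_augment G M hM hmax hv hwc hw
      have h1 : G.degree v ≤ k := by
        rw [SimpleGraph.degree, hk, Set.ncard_eq_toFinset_card M.verts]
        exact Finset.card_le_card hnbr
      have h2 : G.minDegree ≤ G.degree v := G.minDegree_le_degree v
      omega
  -- conclude
  have hν0 : n ≤ indepNum G + 2 * ν := by omega
  have c1 : (n : ℝ) ≤ (indepNum G : ℝ) + 2 * (ν : ℝ) := by exact_mod_cast hν0
  have c2 : (G.minDegree : ℝ) ≤ 2 * (ν : ℝ) := by exact_mod_cast hδ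
  rw [div_le_iff₀ (by norm_num : (0:ℝ) < 4)] at *
  linarith
end
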